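/- arXiv:1602.03148 — 7 statements merged into one kernel-verified Lean document; each statement's English description precedes it below -/
import Mathlib

section
/- Let V be a valuation ring with fraction field F and residue field k. Then every V-submodule E of the d-fold direct sum F^d satisfies dim_k(E ⊗_V k) ≤ d. -/
set_option maxHeartbeats 1000000
set_option synthInstance.maxHeartbeats 1000000

/-- In a valuation ring, among finitely many elements there is one dividing all others. -/
lemma valuationRing_exists_dvd_all {V : Type*} [CommRing V] [IsDomain V] [ValuationRing V]
    {ι : Type*} {s : Finset ι} (hs : s.Nonempty) (c : ι → V) :
    ∃ j ∈ s, ∀ i ∈ s, c j ∣ c i := by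
  classical
  induction hs using Finset.Nonempty.cons_induction with
  | singleton a =>
      exact ⟨a, Finset.mem_singleton_self a, fun i hi => by
        rw [Finset.mem_singleton] at hi; subst hi; rfl⟩
  | cons a s ha hs ih =>
      obtain ⟨j, hj, hdvd⟩ := ih
      rcases ValuationRing.dvd_total (c a) (c j) with h | h
      · exact ⟨a, Finset.mem_cons_self a s, fun i hi => by
          rcases Finset.mem_cons.mp hi with rfl | hi
          · rfl
          · exact h.trans (hdvd i hi)⟩
      · exact ⟨j, Finset.mem_cons_of_mem hj, fun i hi => by
          rcases Finset.mem_cons.mp hi with rfl | hi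
          · exact h
          · exact hdvd i hi⟩

/-- Key step: there is no linearly independent family of `d+1` vectors in `E ⊗ k`. -/
lemma statement_0_key
    (V : Type*) [CommRing V] [IsDomain V] [ValuationRing V]
    (F : Type*) [Field F] [Algebra V F] [IsFractionRing V F]
    (d : ℕ) (E : Submodule V (Fin d → F))
    (f : Fin (d + 1) → TensorProduct V (IsLocalRing.ResidueField V) E)
    (hf : LinearIndependent (IsLocalRing.ResidueField V) f) : False := by
  classical
  have hres : Function.Surjective (algebraMap V (IsLocalRing.ResidueField V)) :=
    IsLocalRing.residue_surjective
  have hsurj : Function.Surjective (TensorProduct.mk V (IsLocalRing.ResidueField V) E 1) :=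
    TensorProduct.mk_surjective V E (IsLocalRing.ResidueField V) hres
  set φ : E →ₗ[V] TensorProduct V (IsLocalRing.ResidueField V) E :=
    TensorProduct.mk V (IsLocalRing.ResidueField V) E 1 with hφ
  choose lift hlift using hsurj
  set e : Fin (d + 1) → E := fun i => lift (f i) with he
  have heφ : ∀ i, φ (e i) = f i := fun i => hlift _
  have hfinj := (linearIndependent_iff_injective_finsuppLinearCombination).mp hf
  -- `e` is linearly independent over `V`
  have hliV : LinearIndependent V e := by
    rw [linearIndependent_iff']
    intro t g hg i hit
    by_contra hgi
    set t' : Finset (Fin (d + 1)) := t.filter (fun i => g i ≠ 0) with ht'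
    have ht'ne : t'.Nonempty := ⟨i, Finset.mem_filter.mpr ⟨hit, hgi⟩⟩
    obtain ⟨j, hjt', hjdvd⟩ := valuationRing_exists_dvd_all ht'ne g
    have hjt : j ∈ t := (Finset.mem_filter.mp hjt').1
    have hgj : g j ≠ 0 := (Finset.mem_filter.mp hjt').2
    -- write g i = g j * r i for all i ∈ t
    have hdvd : ∀ i ∈ t, ∃ r : V, g i = g j * r := by
      intro i hi
      by_cases h : g i = 0
      · exact ⟨0, by rw [h, mul_zero]⟩
      · obtain ⟨r, hr⟩ := hjdvd i (Finset.mem_filter.mpr ⟨hi, h⟩)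
        exact ⟨r, hr⟩
    choose! r hr using hdvd
    -- the combination with coefficients r is killed by g j, hence zero by torsion-freeness
    have hsum : (∑ i ∈ t, r i • e i : E) = 0 := by
      have h1 : g j • (∑ i ∈ t, r i • e i : E) = 0 := by
        rw [Finset.smul_sum, ← hg]
        refine Finset.sum_congr rfl fun i hi => ?_
        rw [smul_smul, ← hr i hi]
      have h2 : g j • ((∑ i ∈ t, r i • e i : E) : Fin d → F) = 0 := by
        have := congrArg (Subtype.val) h1
        simpa using this
      have h3 : algebraMap V F (g j) • ((∑ i ∈ t, r i • e i : E) : Fin d → F) = 0 := by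
        rwa [algebraMap_smul]
      have h4 : algebraMap V F (g j) ≠ 0 := fun h =>
        hgj (IsFractionRing.injective V F (by rw [h, map_zero]))
      have h5 : ((∑ i ∈ t, r i • e i : E) : Fin d → F) = 0 :=
        (smul_eq_zero.mp h3).resolve_left h4
      exact Subtype.ext (by simpa using h5)
    -- push the relation to k ⊗ E
    set c : Fin (d + 1) → IsLocalRing.ResidueField V :=
      fun i => algebraMap V (IsLocalRing.ResidueField V) (r i) with hc
    set l : Fin (d + 1) →₀ IsLocalRing.ResidueField V :=
      ∑ i ∈ t, Finsupp.single i (c i) with hl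
    have hcomb : Finsupp.linearCombination (IsLocalRing.ResidueField V) f l = 0 := by
      rw [hl, map_sum]
      have : ∀ i ∈ t, Finsupp.linearCombination (IsLocalRing.ResidueField V) f
          (Finsupp.single i (c i)) = φ (r i • e i) := by
        intro i hi
        rw [Finsupp.linearCombination_single, map_smul, heφ i, hc, algebraMap_smul]
      rw [Finset.sum_congr rfl this, ← map_sum, hsum, map_zero]
    have hl0 : l = 0 := hfinj (by rw [hcomb, map_zero])
    have hlj : l j = c j := by
      rw [hl, Finset.sum_apply']
      rw [Finset.sum_eq_single j (fun b _ hbj => Finsupp.single_eq_of_ne hbj.symm) (fun h => absurd hjt h)]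
      exact Finsupp.single_eq_same
    have hcj : c j = 0 := by rw [← hlj, hl0]; rfl
    -- but r j = 1
    have hrj1 : r j = 1 := by
      have h6 : g j * 1 = g j * r j := by rw [mul_one, ← hr j hjt]
      exact (mul_left_cancel₀ hgj h6).symm
    rw [hc] at hcj
    simp only [hrj1, map_one] at hcj
    exact one_ne_zero hcj
  -- transfer to F^d over F
  have hliV' : LinearIndependent V (fun i => ((e i : Fin d → F))) :=
    hliV.map' E.subtype (Submodule.ker_subtype E)
  have hliF : LinearIndependent F (fun i => ((e i : Fin d → F))) :=
    hliV'.localization F (nonZeroDivisors V)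
  have hcard := hliF.fintype_card_le_finrank
  simp only [Fintype.card_fin, Module.finrank_pi] at hcard
  omega

/-- Let `V` be a valuation ring with fraction field `F` and residue
field `k`. Then every `V`-submodule `E` of the `d`-fold direct sum `F^d` satisfies
`dim_k (E ⊗_V k) ≤ d`. -/
theorem statement_0
    (V : Type*) [CommRing V] [IsDomain V] [ValuationRing V]
    (F : Type*) [Field F] [Algebra V F] [IsFractionRing V F]
    (d : ℕ) (E : Submodule V (Fin d → F)) :
    Module.rank (IsLocalRing.ResidueField V)
      (TensorProduct V (IsLocalRing.ResidueField V) E) ≤ (d : Cardinal) := by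
  classical
  rw [Module.rank_def]
  apply ciSup_le'
  rintro ⟨s, li⟩
  by_contra h
  rw [not_le] at h
  have hle : ((d + 1 : ℕ) : Cardinal) ≤ Cardinal.mk s := by
    rw [Nat.cast_succ]
    exact (Cardinal.add_one_le_succ _).trans (Order.succ_le_of_lt h)
  obtain ⟨t, ht⟩ := Cardinal.exists_finset_le_card s (d + 1) hle
  obtain ⟨u, hut, hcard⟩ := Finset.exists_subset_card_eq ht
  set g : Fin (d + 1) → s := fun i => (u.equivFin.symm (Fin.cast hcard.symm i) : s) with hg
  have hginj : Function.Injective g := by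
    intro a b hab
    have := Subtype.coe_injective hab
    have := u.equivFin.symm.injective this
    simpa [Fin.ext_iff] using congrArg Fin.val this
  exact statement_0_key V F d E (fun i => ((g i : s) : _)) (li.comp g hginj)
end

section
/- Let V be a valuation ring which is not a field and whose maximal ideal 𝔪 satisfies 𝔪 = 𝔪², with fraction field F and residue field k. If D ⊆ F^d is a V-submodule with dim_k(D ⊗_V k) = d, then D is a free V-module of rank d. -/
open IsLocalRing Submodule

set_option maxHeartbeats 1000000 in
set_option synthInstance.maxHeartbeats 400000 in
theorem statement_1_aux
    (V : Type*) [CommRing V] [IsDomain V] [ValuationRing V]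
    (F : Type*) [Field F] [Algebra V F] [IsFractionRing V F]
    (d : ℕ) (D : Submodule V (Fin d → F))
    (M : Type*) [AddCommGroup M] [Module (IsLocalRing.ResidueField V) M]
    [Module V M]
    (φ : D →ₗ[V] M)
    (hφsmul : ∀ (u : V) (x : D), φ (u • x) = IsLocalRing.residue V u • φ x)
    (hspan : span (IsLocalRing.ResidueField V) (Set.range (φ : D → M)) = ⊤)
    (hrank : Module.rank (IsLocalRing.ResidueField V) M = (d : Cardinal)) :
    Nonempty (D ≃ₗ[V] (Fin d → V)) := by
  classical
  -- extract a basis from the spanning set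
  obtain ⟨bset, hbsub, hbspan, hbli⟩ :=
    exists_linearIndependent (ResidueField V)
      (Set.range (φ : D → M))
  rw [hspan] at hbspan
  have hcard : (Cardinal.mk bset) = (d : Cardinal) := by
    rw [(Module.Basis.mk hbli (by rw [Subtype.range_coe]; exact hbspan.ge)).mk_eq_rank'', hrank]
  obtain ⟨σ'⟩ := Cardinal.mk_eq_nat_iff.mp hcard
  obtain ⟨B, hBapply⟩ : ∃ B : Module.Basis (Fin d) (ResidueField V)
      (M),
      ∀ i, B i = ((σ'.symm i : M)) :=
    ⟨(Module.Basis.mk hbli (by rw [Subtype.range_coe]; exact hbspan.ge)).reindex σ',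
      fun i => by rw [Module.Basis.reindex_apply, Module.Basis.mk_apply]⟩
  have he : ∀ i, ∃ x : D, φ x = B i := by
    intro i
    rcases hbsub (σ'.symm i).2 with ⟨x, hx⟩
    exact ⟨x, by rw [hx, hBapply]⟩
  choose e hφe using he
  -- key lemma: if φ of a combination of the `e i` vanishes, all coefficients lie in 𝔪
  have hK : ∀ u : Fin d → V, φ (∑ i, u i • e i) = 0 → ∀ i, u i ∈ maximalIdeal V := by
    intro u hu i
    rw [map_sum] at hu
    simp_rw [hφsmul, hφe] at hu
    have h0 := (Fintype.linearIndependent_iff.mp B.linearIndependent) _ hu i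
    rwa [← Ideal.Quotient.eq_zero_iff_mem]
  have hinj : Function.Injective (algebraMap V F) := IsFractionRing.injective V F
  set E : Fin d → (Fin d → F) := fun i => (e i : Fin d → F) with hE
  set v := ValuationRing.valuation V F with hv
  have hone : (1 : V) ∉ maximalIdeal V :=
    (Ideal.ne_top_iff_one _).mp (IsLocalRing.maximalIdeal.isMaximal V).ne_top
  -- the E i are linearly independent over V
  have hli : LinearIndependent V E := by
    rw [Fintype.linearIndependent_iff]
    intro a ha
    by_contra hcon
    push_neg at hcon
    obtain ⟨i₀, hi₀⟩ := hcon
    set s := Finset.univ.filter (fun i => a i ≠ 0) with hs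
    have hsne : s.Nonempty := ⟨i₀, by simp [hs, hi₀]⟩
    obtain ⟨j, hjs, hjmax⟩ := s.exists_max_image (fun i => v (algebraMap V F (a i))) hsne
    have haj : a j ≠ 0 := by simpa [hs] using hjs
    have hAj : algebraMap V F (a j) ≠ 0 := fun h => haj (hinj (by rw [h, map_zero]))
    have hvAj : v (algebraMap V F (a j)) ≠ 0 := fun h => hAj (by simpa using h)
    have hdvd : ∀ i, a j ∣ a i := by
      intro i
      by_cases h0 : a i = 0
      · simp [h0]
      · have hi : i ∈ s := by simp [hs, h0]
        have hle := hjmax i hi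
        have hint : v (algebraMap V F (a i) / algebraMap V F (a j)) ≤ 1 := by
          rw [map_div₀]
          exact (div_le_one₀ (zero_lt_iff.mpr hvAj)).mpr hle
        obtain ⟨c, hc⟩ := (ValuationRing.mem_integer_iff V F _).mp hint
        refine ⟨c, hinj ?_⟩
        rw [map_mul, hc, mul_div_cancel₀ _ hAj]
    choose bb hbb using hdvd
    have hbj : bb j = 1 := mul_left_cancel₀ haj (by rw [← hbb j, mul_one])
    have h2 : (∑ i, bb i • E i) = 0 := by
      have h1 : a j • (∑ i, bb i • E i) = 0 := by
        rw [Finset.smul_sum, ← ha]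
        refine Finset.sum_congr rfl fun i _ => ?_
        rw [smul_smul, ← hbb i]
      rw [← algebraMap_smul F (a j) (∑ i, bb i • E i)] at h1
      rcases smul_eq_zero.mp h1 with h | h
      · exact absurd h hAj
      · exact h
    have hsum0 : (∑ i, bb i • e i : D) = 0 := by
      apply Subtype.ext
      push_cast
      simpa using h2
    have := hK bb (by rw [hsum0, map_zero]) j
    rw [hbj] at this
    exact hone this
  -- hence linearly independent over F, and a basis of F^d
  have hliF : LinearIndependent F E := (LinearIndependent.iff_fractionRing V F).mp hli
  have hspanF : span F (Set.range E) = ⊤ :=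
    hliF.span_eq_top_of_card_eq_finrank' (by simp)
  obtain ⟨BF, hBF⟩ : ∃ BF : Module.Basis (Fin d) F (Fin d → F), ∀ i, BF i = E i :=
    ⟨Module.Basis.mk hliF hspanF.ge, fun i => Module.Basis.mk_apply _ _ _⟩
  -- every element of D has coordinates in V
  have hcoord : ∀ (z : D) (i : Fin d),
      ∃ w : V, algebraMap V F w = BF.repr (z : Fin d → F) i := by
    intro z
    by_contra hcon
    push_neg at hcon
    obtain ⟨i₀, hi₀⟩ := hcon
    set c : Fin d → F := fun i => BF.repr (z : Fin d → F) i with hc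
    obtain ⟨j, -, hjmax⟩ :=
      Finset.univ.exists_max_image (fun i => v (c i)) ⟨i₀, Finset.mem_univ _⟩
    have h1 : ¬ v (c i₀) ≤ 1 := by
      intro h
      obtain ⟨w, hw⟩ := (ValuationRing.mem_integer_iff V F _).mp h
      exact hi₀ w hw
    have hvj : 1 < v (c j) := lt_of_lt_of_le (not_le.mp h1) (hjmax i₀ (Finset.mem_univ _))
    have hcj0 : c j ≠ 0 := by
      intro h
      rw [h, map_zero] at hvj
      simp at hvj
    have hvj0 : v (c j) ≠ 0 := fun h => hcj0 (by simpa using h)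
    have hinvle : v (c j)⁻¹ ≤ 1 := by
      rw [map_inv₀]
      exact le_of_lt ((inv_lt_one₀ (zero_lt_iff.mpr hvj0)).mpr hvj)
    obtain ⟨m, hmm⟩ := (ValuationRing.mem_integer_iff V F _).mp hinvle
    have hm𝔪 : m ∈ maximalIdeal V := by
      rw [IsLocalRing.mem_maximalIdeal]
      rintro ⟨uu, huu⟩
      have h1 : algebraMap V F m * algebraMap V F (↑uu⁻¹) = 1 := by
        rw [← map_mul, ← huu, Units.mul_inv, map_one]
      rw [hmm] at h1
      have h2 : algebraMap V F (↑uu⁻¹) = c j := ((inv_mul_eq_one₀ hcj0).mp h1).symm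
      have : v (c j) ≤ 1 :=
        (ValuationRing.mem_integer_iff V F _).mpr ⟨↑uu⁻¹, h2⟩
      exact absurd this (not_le.mpr hvj)
    have hu : ∀ i, ∃ w : V, algebraMap V F w = (c j)⁻¹ * c i := by
      intro i
      refine (ValuationRing.mem_integer_iff V F _).mp ?_
      rw [Valuation.mem_integer_iff, map_mul, map_inv₀]
      calc (v (c j))⁻¹ * v (c i) ≤ (v (c j))⁻¹ * v (c j) :=
            mul_le_mul_right (hjmax i (Finset.mem_univ _)) _
        _ = 1 := inv_mul_cancel₀ hvj0
    choose u huu using hu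
    have huj : u j = 1 := by
      apply hinj
      rw [huu j, inv_mul_cancel₀ hcj0, map_one]
    have hzrepr : (z : Fin d → F) = ∑ i, c i • E i := by
      conv_lhs => rw [← BF.sum_repr (z : Fin d → F)]
      exact Finset.sum_congr rfl fun i _ => by rw [hBF]
    have hyeq : (∑ i, u i • e i : D) = m • z := by
      apply Subtype.ext
      have hmz : ((m • z : D) : Fin d → F) = (c j)⁻¹ • (z : Fin d → F) := by
        rw [Submodule.coe_smul, ← algebraMap_smul F m (z : Fin d → F), hmm]
      rw [hmz]
      push_cast
      rw [hzrepr, Finset.smul_sum]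
      refine Finset.sum_congr rfl fun i _ => ?_
      rw [← algebraMap_smul F (u i) (E i), huu i, smul_smul]
    have hφy : φ (∑ i, u i • e i) = 0 := by
      rw [hyeq, hφsmul]
      have : residue V m = 0 := Ideal.Quotient.eq_zero_iff_mem.mpr hm𝔪
      rw [this, zero_smul]
    have := hK u hφy j
    rw [huj] at this
    exact hone this
  -- assemble the linear equivalence
  let ℓ : (Fin d → V) →ₗ[V] D := Fintype.linearCombination V e
  have hℓ : ∀ a : Fin d → V, ℓ a = ∑ i, a i • e i := fun a => rfl
  have hinjℓ : Function.Injective ℓ := by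
    rw [← LinearMap.ker_eq_bot, eq_bot_iff]
    intro a ha
    rw [LinearMap.mem_ker, hℓ] at ha
    have hE0 : (∑ i, a i • E i) = 0 := by
      have h3 : ((∑ i, a i • e i : D) : Fin d → F) = 0 := by rw [ha]; rfl
      simpa using h3
    have h4 := Fintype.linearIndependent_iff.mp hli a hE0
    ext i
    exact h4 i
  have hsurjℓ : Function.Surjective ℓ := by
    intro z
    choose w hw using hcoord z
    refine ⟨w, ?_⟩
    rw [hℓ]
    apply Subtype.ext
    push_cast
    conv_rhs => rw [← BF.sum_repr (z : Fin d → F)]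
    refine Finset.sum_congr rfl fun i _ => ?_
    rw [hBF, ← hw i]
    exact (algebraMap_smul F (w i) (E i)).symm
  exact ⟨(LinearEquiv.ofBijective ℓ ⟨hinjℓ, hsurjℓ⟩).symm⟩


set_option maxHeartbeats 1000000 in
set_option synthInstance.maxHeartbeats 400000 in
/-- Let `V` be a valuation ring which is not a field and whose maximal
ideal `𝔪` satisfies `𝔪 = 𝔪²`, with fraction field `F` and residue field `k`.  If
`D ⊆ F^d` is a `V`-submodule with `dim_k (D ⊗_V k) = d`, then `D` is a free `V`-module of
rank `d`. -/
theorem statement_1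
    (V : Type*) [CommRing V] [IsDomain V] [ValuationRing V]
    (hV : ¬ IsField V)
    (hm : IsLocalRing.maximalIdeal V = (IsLocalRing.maximalIdeal V) ^ 2)
    (F : Type*) [Field F] [Algebra V F] [IsFractionRing V F]
    (d : ℕ) (D : Submodule V (Fin d → F))
    (hD : Module.rank (IsLocalRing.ResidueField V)
      (TensorProduct V (IsLocalRing.ResidueField V) D) = (d : Cardinal)) :
    Nonempty (D ≃ₗ[V] (Fin d → V)) := by
  classical
  let φ : D →ₗ[V] TensorProduct V (ResidueField V) D :=
    TensorProduct.mk V (ResidueField V) D 1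
  have hφdef : ∀ x : D, φ x = (1 : ResidueField V) ⊗ₜ[V] x := fun _ => rfl
  have hφsmul : ∀ (u : V) (x : D), φ (u • x) = IsLocalRing.residue V u • φ x := by
    intro u x
    rw [hφdef, hφdef, TensorProduct.tmul_smul, TensorProduct.smul_tmul',
      TensorProduct.smul_tmul']
    congr 1
  have hspan : span (ResidueField V)
      (Set.range (φ : D → TensorProduct V (ResidueField V) D)) = ⊤ := by
    rw [eq_top_iff]
    rintro z -
    induction z using TensorProduct.induction_on with
    | zero => exact Submodule.zero_mem _
    | tmul c x =>
        have : c ⊗ₜ[V] x = c • ((1 : ResidueField V) ⊗ₜ[V] x) := by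
          rw [TensorProduct.smul_tmul', smul_eq_mul, mul_one]
        rw [this]
        exact Submodule.smul_mem _ _ (Submodule.subset_span ⟨x, rfl⟩)
    | add a b ha hb => exact Submodule.add_mem _ ha hb
  exact statement_1_aux V F d D (TensorProduct V (ResidueField V) D) φ hφsmul hspan hD
end

section
/- Let p be a prime and let A → B be a ring homomorphism such that A and B are p-adically complete and p-torsion-free, A is Noetherian, and the induced map A/pA → B/pB is flat. Then A → B is flat. -/
set_option maxHeartbeats 1600000

open TensorProduct LinearMap Finset Pointwise

namespace Statement7Aux

section Poly
universe u v
variable {R : Type u} {M : Type v} [CommRing R] [AddCommGroup M] [Module R M]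

private def dotL {s : ℕ} (f : Fin s → R) : (Fin s → R) →ₗ[R] R :=
  ∑ i, f i • LinearMap.proj i

private lemma dotL_apply {s : ℕ} (f v : Fin s → R) : dotL f v = ∑ i, f i * v i := by
  simp [dotL, LinearMap.sum_apply, smul_eq_mul]

/-- Single-relation equational criterion, forward direction, universe polymorphic. -/
theorem flat_trivial_rel [Module.Flat R M] {s : ℕ} (f : Fin s → R) (x : Fin s → M)
    (h : ∑ i, f i • x i = 0) :
    ∃ (k : ℕ) (κ : Fin k → Fin s → R) (y : Fin k → M),
      (∀ j, ∑ i, f i * κ j i = 0) ∧ (∀ i, x i = ∑ j, κ j i • y j) := by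
  classical
  set π : (Fin s → R) →ₗ[R] R := dotL f with hπ
  have hex : Function.Exact (ker π).subtype π := LinearMap.exact_subtype_ker_map π
  have hex2 := Module.Flat.rTensor_exact (R := R) M hex
  set ξ : (Fin s → R) ⊗[R] M := ∑ i, (Pi.single i 1 : Fin s → R) ⊗ₜ x i with hξdef
  have hξ : rTensor M π ξ = 0 := by
    have h1 : rTensor M π ξ = ∑ i, (f i) ⊗ₜ[R] x i := by
      rw [hξdef, map_sum]
      refine Finset.sum_congr rfl fun i _ => ?_
      rw [rTensor_tmul]
      congr 1
      rw [dotL_apply]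
      simp [Pi.single_apply, mul_ite]
    have h2 : ∀ i : Fin s, (f i) ⊗ₜ[R] x i = (1 : R) ⊗ₜ[R] (f i • x i) := by
      intro i
      rw [tmul_smul, smul_tmul', smul_eq_mul, mul_one]
    rw [h1, Finset.sum_congr rfl (fun i _ => h2 i), ← tmul_sum, h, tmul_zero]
  have hmem : ξ ∈ Set.range (rTensor M (ker π).subtype) := (hex2 ξ).mp hξ
  obtain ⟨ζ, hζ⟩ := hmem
  obtain ⟨S, hS⟩ := TensorProduct.exists_finset ζ
  let e := (Fintype.equivFin ↥S)
  refine ⟨Fintype.card ↥S, fun j i => (((e.symm j : ↥S) : (ker π) × M).1 : Fin s → R) i,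
    fun j => ((e.symm j : ↥S) : (ker π) × M).2, fun j => ?_, fun i => ?_⟩
  · have : π (((e.symm j : ↥S) : (ker π) × M).1 : Fin s → R) = 0 :=
      (((e.symm j : ↥S) : (ker π) × M).1).2
    rw [dotL_apply] at this
    exact this
  · -- coordinate extraction
    set Φ : (Fin s → R) ⊗[R] M →ₗ[R] M :=
      (TensorProduct.lid R M).toLinearMap ∘ₗ rTensor M (LinearMap.proj i) with hΦ
    have hΦt : ∀ (v : Fin s → R) (m : M), Φ (v ⊗ₜ m) = v i • m := by
      intro v m; simp [hΦ]
    have e1 : Φ ξ = x i := by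
      rw [hξdef, map_sum]
      rw [Finset.sum_congr rfl (fun l _ => hΦt _ _)]
      simp [Pi.single_apply, ite_smul]
    have e2 : Φ ξ = ∑ z ∈ S, ((z.1 : Fin s → R) i) • z.2 := by
      rw [← hζ, hS, map_sum, map_sum]
      refine Finset.sum_congr rfl fun z _ => ?_
      rw [rTensor_tmul, hΦt]
      rfl
    rw [← e1, e2]
    rw [← Finset.sum_attach S (fun z => ((z.1 : Fin s → R) i) • z.2)]
    exact (Equiv.sum_comp e.symm _).symm


/-- renamed alias used below -/
theorem flat_trivial_rel' [Module.Flat R M] {s : ℕ} (f : Fin s → R) (x : Fin s → M)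
    (h : ∑ i, f i • x i = 0) :
    ∃ (k : ℕ) (κ : Fin k → Fin s → R) (y : Fin k → M),
      (∀ j, ∑ i, f i * κ j i = 0) ∧ (∀ i, x i = ∑ j, κ j i • y j) :=
  flat_trivial_rel f x h

/-- Systems of linear relations in a flat module trivialize. -/
theorem flat_trivial_sys [Module.Flat R M] :
    ∀ (q : ℕ) {s : ℕ} (a : Fin q → Fin s → R) (x : Fin s → M),
      (∀ t, ∑ i, a t i • x i = 0) →
      ∃ (k : ℕ) (κ : Fin k → Fin s → R) (y : Fin k → M),
        (∀ j t, ∑ i, a t i * κ j i = 0) ∧ (∀ i, x i = ∑ j, κ j i • y j) := by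
  intro q
  induction q with
  | zero =>
    intro s a x _
    classical
    refine ⟨s, fun j i => if i = j then 1 else 0, x, fun j t => t.elim0, fun i => ?_⟩
    simp [ite_smul]
  | succ q IH =>
    intro s a x hx
    obtain ⟨k₀, κ₀, y₀, hrel₀, hx₀⟩ := flat_trivial_rel' (a 0) x (hx 0)
    set ψ : Fin q → Fin k₀ → R := fun t j => ∑ i, a t.succ i * κ₀ j i with hψ
    have hy : ∀ t, ∑ j, ψ t j • y₀ j = 0 := by
      intro t
      have h0 := hx t.succ
      calc ∑ j, ψ t j • y₀ j
          = ∑ j, ∑ i, (a t.succ i * κ₀ j i) • y₀ j := by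
            refine Finset.sum_congr rfl fun j _ => ?_
            rw [hψ, Finset.sum_smul]
        _ = ∑ i, ∑ j, (a t.succ i * κ₀ j i) • y₀ j := Finset.sum_comm
        _ = ∑ i, a t.succ i • x i := by
            refine Finset.sum_congr rfl fun i _ => ?_
            rw [hx₀ i, Finset.smul_sum]
            exact Finset.sum_congr rfl fun j _ => (smul_smul _ _ _).symm
        _ = 0 := h0
    obtain ⟨k, lam, z, hrel, hyz⟩ := IH ψ y₀ hy
    refine ⟨k, fun m i => ∑ j, lam m j * κ₀ j i, z, fun m t => ?_, fun i => ?_⟩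
    · refine Fin.cases ?_ ?_ t
      · calc ∑ i, a 0 i * ∑ j, lam m j * κ₀ j i
            = ∑ i, ∑ j, a 0 i * (lam m j * κ₀ j i) := by
              exact Finset.sum_congr rfl fun i _ => by rw [Finset.mul_sum]
          _ = ∑ j, ∑ i, a 0 i * (lam m j * κ₀ j i) := Finset.sum_comm
          _ = ∑ j, lam m j * ∑ i, a 0 i * κ₀ j i := by
              refine Finset.sum_congr rfl fun j _ => ?_
              rw [Finset.mul_sum]
              exact Finset.sum_congr rfl fun i _ => by ring
          _ = 0 := by simp [hrel₀]
      · intro t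
        calc ∑ i, a t.succ i * ∑ j, lam m j * κ₀ j i
            = ∑ i, ∑ j, a t.succ i * (lam m j * κ₀ j i) := by
              exact Finset.sum_congr rfl fun i _ => by rw [Finset.mul_sum]
          _ = ∑ j, ∑ i, a t.succ i * (lam m j * κ₀ j i) := Finset.sum_comm
          _ = ∑ j, ψ t j * lam m j := by
              refine Finset.sum_congr rfl fun j _ => ?_
              rw [hψ, Finset.sum_mul]
              exact Finset.sum_congr rfl fun i _ => by ring
          _ = 0 := hrel m t
    · calc x i = ∑ j, κ₀ j i • y₀ j := hx₀ i
        _ = ∑ j, κ₀ j i • ∑ m, lam m j • z m := by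
            exact Finset.sum_congr rfl fun j _ => by rw [hyz j]
        _ = ∑ j, ∑ m, (lam m j * κ₀ j i) • z m := by
            refine Finset.sum_congr rfl fun j _ => ?_
            rw [Finset.smul_sum]
            exact Finset.sum_congr rfl fun m _ => by rw [smul_smul, mul_comm]
        _ = ∑ m, ∑ j, (lam m j * κ₀ j i) • z m := Finset.sum_comm
        _ = ∑ m, (∑ j, lam m j * κ₀ j i) • z m := by
            exact Finset.sum_congr rfl fun m _ => (Finset.sum_smul).symm

/-- Converse equational criterion: if all relations trivialize, the module is flat. -/
theorem flat_of_trivial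
    (H : ∀ (s : ℕ) (f : Fin s → R) (x : Fin s → M), ∑ i, f i • x i = 0 →
      ∃ (k : ℕ) (κ : Fin k → Fin s → R) (y : Fin k → M),
        (∀ j, ∑ i, f i * κ j i = 0) ∧ (∀ i, x i = ∑ j, κ j i • y j)) :
    Module.Flat R M := by
  classical
  rw [Module.Flat.iff_rTensor_injective']
  intro I
  rw [← LinearMap.ker_eq_bot, LinearMap.ker_eq_bot']
  intro ξ hξ
  obtain ⟨S, hS⟩ := TensorProduct.exists_finset ξ
  let e := Fintype.equivFin ↥S
  set s := Fintype.card ↥S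
  set aI : Fin s → I := fun j => ((e.symm j : ↥S) : I × M).1 with haI
  set mm : Fin s → M := fun j => ((e.symm j : ↥S) : I × M).2 with hmm
  have hξ2 : ξ = ∑ j, (aI j) ⊗ₜ[R] mm j := by
    rw [hS, ← Finset.sum_attach S (fun z => z.1 ⊗ₜ[R] z.2)]
    exact (Equiv.sum_comp e.symm _).symm
  have hrel : ∑ j, (aI j : R) • mm j = 0 := by
    have h1 : rTensor M I.subtype ξ = ∑ j, ((aI j : R)) ⊗ₜ[R] mm j := by
      rw [hξ2, map_sum]
      exact Finset.sum_congr rfl fun j _ => rfl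
    have := congrArg (TensorProduct.lid R M) (h1.symm.trans hξ)
    simpa [map_sum] using this
  obtain ⟨k, κ, y, hκ, hxy⟩ := H s (fun j => (aI j : R)) mm hrel
  have : ξ = ∑ l, ((∑ j, κ l j • aI j) : I) ⊗ₜ[R] y l := by
    rw [hξ2]
    calc ∑ j, (aI j) ⊗ₜ[R] mm j
        = ∑ j, ∑ l, (κ l j • aI j) ⊗ₜ[R] y l := by
          refine Finset.sum_congr rfl fun j _ => ?_
          rw [hxy j, tmul_sum]
          exact Finset.sum_congr rfl fun l _ => by rw [tmul_smul, smul_tmul']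
      _ = ∑ l, ∑ j, (κ l j • aI j) ⊗ₜ[R] y l := Finset.sum_comm
      _ = ∑ l, ((∑ j, κ l j • aI j) : I) ⊗ₜ[R] y l := by
          exact Finset.sum_congr rfl fun l _ => (sum_tmul _ _ _).symm
  rw [this]
  have hz : ∀ l, ((∑ j, κ l j • aI j) : I) = 0 := by
    intro l
    ext
    push_cast
    calc ∑ j, κ l j * (aI j : R) = ∑ j, (aI j : R) * κ l j := by
          exact Finset.sum_congr rfl fun j _ => mul_comm _ _
      _ = 0 := hκ l
  rw [Finset.sum_congr rfl (fun l _ => by rw [hz l])]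
  simp


end Poly

section AR

variable {A : Type*} [CommRing A]

private lemma mem_pow_smul_top_iff {M : Type*} [AddCommGroup M] [Module A M]
    (r : A) (m : ℕ) (x : M) :
    x ∈ (Ideal.span {r} ^ m • ⊤ : Submodule A M) ↔ ∃ y, x = r ^ m • y := by
  rw [Ideal.span_singleton_pow, Submodule.ideal_span_singleton_smul]
  constructor
  · intro hx
    obtain ⟨y, -, hy⟩ := Set.mem_smul_set.mp hx
    exact ⟨y, hy.symm⟩
  · rintro ⟨y, rfl⟩
    exact Submodule.smul_mem_pointwise_smul y _ ⊤ trivial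

/-- Artin–Rees style statement for a linear map between finite free modules. -/
private lemma AR_maps [IsNoetherianRing A] {s q : ℕ}
    (g : (Fin s → A) →ₗ[A] (Fin q → A)) (p : ℕ) :
    ∃ k : ℕ, ∀ (n : ℕ) (v : Fin s → A), (∀ t, (p : A) ^ (n + k) ∣ g v t) →
      ∃ (y w : Fin s → A), g y = 0 ∧ v = y + (p : A) ^ n • w := by
  obtain ⟨k, hk⟩ := Ideal.exists_pow_inf_eq_pow_smul (Ideal.span {(p : A)})
    (LinearMap.range g)
  refine ⟨k, fun n v hv => ?_⟩
  have h1 : g v ∈ (Ideal.span {(p : A)} ^ (n + k) • ⊤ ⊓ LinearMap.range g :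
      Submodule A (Fin q → A)) := by
    rw [Submodule.mem_inf]
    constructor
    · rw [mem_pow_smul_top_iff]
      choose z hz using hv
      exact ⟨z, funext fun t => by rw [Pi.smul_apply, smul_eq_mul, ← hz t]⟩
    · exact ⟨v, rfl⟩
  rw [hk (n + k) (by omega)] at h1
  have h2 : g v ∈ (Ideal.span {(p : A)} ^ n • LinearMap.range g :
      Submodule A (Fin q → A)) :=
    Submodule.smul_mono le_rfl inf_le_right (by simpa using h1)
  rw [Ideal.span_singleton_pow, Submodule.ideal_span_singleton_smul] at h2
  obtain ⟨z, hz, hzv⟩ := Set.mem_smul_set.mp h2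
  obtain ⟨u, rfl⟩ := hz
  refine ⟨v - (p : A) ^ n • u, u, ?_, by ring⟩
  rw [map_sub, map_smul, hzv, sub_self]


end AR

section Main
variable (p : ℕ) {A B : Type*} [CommRing A] [CommRing B] [Algebra A B]
variable [Algebra (A ⧸ Ideal.span {(p : A)}) (B ⧸ Ideal.span {(p : B)})]

private lemma swap_sum {R : Type*} [CommRing R] {n k : ℕ} (g : Fin n → R)
    (h : Fin n → Fin k → R) (z : Fin k → R) :
    ∑ j, (∑ τ, g τ * h τ j) * z j = ∑ τ, g τ * ∑ j, h τ j * z j := by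
  calc ∑ j, (∑ τ, g τ * h τ j) * z j
      = ∑ j, ∑ τ, g τ * (h τ j * z j) := by
        refine Finset.sum_congr rfl fun j _ => ?_
        rw [Finset.sum_mul]
        exact Finset.sum_congr rfl fun τ _ => by ring
    _ = ∑ τ, ∑ j, g τ * (h τ j * z j) := Finset.sum_comm
    _ = ∑ τ, g τ * ∑ j, h τ j * z j := by
        refine Finset.sum_congr rfl fun τ _ => ?_
        rw [Finset.mul_sum]


theorem key_base
    (halg : ∀ a : A,
      algebraMap (A ⧸ Ideal.span {(p : A)}) (B ⧸ Ideal.span {(p : B)})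
          (Ideal.Quotient.mk _ a)
        = Ideal.Quotient.mk _ (algebraMap A B a))
    (hflat : Module.Flat (A ⧸ Ideal.span {(p : A)}) (B ⧸ Ideal.span {(p : B)}))
    (q s : ℕ) (a : Fin q → Fin s → A) (b : Fin s → B)
    (hb : ∀ t, (p : B) ∣ ∑ i, algebraMap A B (a t i) * b i) :
    ∃ (r : ℕ) (c : Fin r → B) (x : Fin r → Fin s → A) (d : Fin s → B),
      (∀ j t, (p : A) ∣ ∑ i, a t i * x j i) ∧
      (∀ i, b i = (∑ j, c j * algebraMap A B (x j i)) + (p : B) * d i) := by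
  classical
  haveI := hflat
  set mkA := Ideal.Quotient.mk (Ideal.span {(p : A)}) with hmkA
  set mkB := Ideal.Quotient.mk (Ideal.span {(p : B)}) with hmkB
  have hpB : mkB (p : B) = 0 := by
    rw [Ideal.Quotient.eq_zero_iff_mem]
    exact Ideal.mem_span_singleton_self _
  have hmul : ∀ (u : A) (v : B), (mkA u) • (mkB v) = mkB (algebraMap A B u * v) := by
    intro u v
    rw [Algebra.smul_def, halg, ← map_mul]
  have hsys : ∀ t, ∑ i, (mkA (a t i)) • (mkB (b i)) = 0 := by
    intro t
    obtain ⟨β, hβ⟩ := hb t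
    rw [Finset.sum_congr rfl (fun i _ => hmul _ _), ← map_sum, hβ, map_mul, hpB, zero_mul]
  obtain ⟨k, κ, y, hκ, hxy⟩ :=
    @flat_trivial_sys (A ⧸ Ideal.span {(p : A)}) (B ⧸ Ideal.span {(p : B)}) _ _
      Algebra.toModule hflat q s (fun t i => mkA (a t i)) (fun i => mkB (b i)) hsys
  have surjA := Ideal.Quotient.mk_surjective (I := Ideal.span {(p : A)})
  have surjB := Ideal.Quotient.mk_surjective (I := Ideal.span {(p : B)})
  choose xf hxf using fun j i => surjA (κ j i)
  choose c hc using fun j => surjB (y j)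
  have hdvd : ∀ j t, (p : A) ∣ ∑ i, a t i * xf j i := by
    intro j t
    rw [← Ideal.mem_span_singleton]
    rw [← Ideal.Quotient.eq_zero_iff_mem]
    show mkA _ = 0
    rw [map_sum]
    rw [Finset.sum_congr rfl (fun i _ => by rw [map_mul, hxf])]
    exact hκ j t
  have hdec : ∀ i, (p : B) ∣ (b i - ∑ j, c j * algebraMap A B (xf j i)) := by
    intro i
    rw [← Ideal.mem_span_singleton, ← Ideal.Quotient.eq_zero_iff_mem]
    show mkB _ = 0
    rw [map_sub, map_sum]
    have : ∀ j, mkB (c j * algebraMap A B (xf j i)) = κ j i • y j := by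
      intro j
      rw [map_mul, hc, ← halg, hxf, Algebra.smul_def, mul_comm]
    rw [Finset.sum_congr rfl (fun j _ => this j), hxy i, sub_self]
  choose d hd using fun i => hdec i
  refine ⟨k, c, xf, d, hdvd, fun i => ?_⟩
  have h := hd i
  have : b i - ∑ j, c j * algebraMap A B (xf j i) = (p : B) * d i := h
  linear_combination this

theorem cancel_pow (hBtf : ∀ b : B, (p : B) * b = 0 → b = 0) (m : ℕ) {u v : B}
    (h : (p : B) ^ m * u = (p : B) ^ m * v) : u = v := by
  induction m with
  | zero => simpa using h
  | succ m IH =>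
    apply IH
    have h2 : (p : B) * ((p : B) ^ m * u - (p : B) ^ m * v) = 0 := by
      rw [mul_sub]
      rw [pow_succ] at h
      ring_nf
      ring_nf at h
      rw [sub_eq_zero]
      linear_combination h
    exact sub_eq_zero.mp (hBtf _ h2)

theorem key
    (halg : ∀ a : A,
      algebraMap (A ⧸ Ideal.span {(p : A)}) (B ⧸ Ideal.span {(p : B)})
          (Ideal.Quotient.mk _ a)
        = Ideal.Quotient.mk _ (algebraMap A B a))
    (hflat : Module.Flat (A ⧸ Ideal.span {(p : A)}) (B ⧸ Ideal.span {(p : B)}))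
    (hBtf : ∀ b : B, (p : B) * b = 0 → b = 0) :
    ∀ (m q s : ℕ) (a : Fin q → Fin s → A) (b : Fin s → B),
    (∀ t, (p : B) ^ (m + 1) ∣ ∑ i, algebraMap A B (a t i) * b i) →
    ∃ (r : ℕ) (c : Fin r → B) (x : Fin r → Fin s → A) (d : Fin s → B),
      (∀ j t, (p : A) ^ (m + 1) ∣ ∑ i, a t i * x j i) ∧
      (∀ i, b i = (∑ j, c j * algebraMap A B (x j i)) + (p : B) ^ (m + 1) * d i) := by
  intro m
  induction m with
  | zero =>
    intro q s a b hb
    simpa using key_base p halg hflat q s a b (by simpa using hb)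
  | succ m IH =>
    intro q s a b hb
    set f := algebraMap A B with hf
    have hfp : f (p : A) = (p : B) := by rw [map_natCast]
    -- step 1: apply IH
    obtain ⟨r, c, x, d, hx, hbd⟩ := IH q s a b (fun t => dvd_trans (pow_dvd_pow _ (by omega)) (hb t))
    choose e he using hx
    -- step 2: the divided relation
    have hU : ∀ t, (p : B) ∣ (∑ j, c j * f (e j t)) + (∑ i, f (a t i) * d i) := by
      intro t
      obtain ⟨V, hV⟩ := hb t
      have hcomp : ∑ i, f (a t i) * b i
          = (p : B) ^ (m + 1) * ((∑ j, c j * f (e j t)) + (∑ i, f (a t i) * d i)) := by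
        calc ∑ i, f (a t i) * b i
            = ∑ i, (∑ j, f (a t i) * (c j * f (x j i)) )
              + (p : B) ^ (m+1) * ∑ i, f (a t i) * d i := by
              rw [Finset.mul_sum, ← Finset.sum_add_distrib]
              refine Finset.sum_congr rfl fun i _ => ?_
              rw [hbd i, mul_add, Finset.mul_sum]
              ring_nf
          _ = ∑ j, c j * f (∑ i, a t i * x j i) + (p : B) ^ (m+1) * ∑ i, f (a t i) * d i := by
              congr 1
              rw [Finset.sum_comm]
              refine Finset.sum_congr rfl fun j _ => ?_
              rw [map_sum, Finset.mul_sum]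
              refine Finset.sum_congr rfl fun i _ => ?_
              rw [map_mul]
              ring
          _ = (p : B) ^ (m + 1) * ((∑ j, c j * f (e j t)) + (∑ i, f (a t i) * d i)) := by
              rw [mul_add]
              congr 1
              rw [Finset.mul_sum]
              refine Finset.sum_congr rfl fun j _ => ?_
              rw [he j t, map_mul, map_pow, hfp]
              ring
      have hcan : (∑ j, c j * f (e j t)) + (∑ i, f (a t i) * d i) = (p : B) * V := by
        apply cancel_pow p hBtf (m+1)
        rw [← hcomp, hV]
        ring
      exact ⟨V, hcan⟩
    -- step 3: apply the base case to the combined relation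
    obtain ⟨r₂, w, uv, d₂, h1, h2⟩ := key_base p halg hflat q (r + s)
      (fun t => Fin.append (fun j => e j t) (a t)) (Fin.append c d)
      (by
        intro t
        obtain ⟨V, hV⟩ := hU t
        refine ⟨V, ?_⟩
        rw [Fin.sum_univ_add]
        simp only [Fin.append_left, Fin.append_right]
        rw [← hV]
        congr 1
        exact Finset.sum_congr rfl fun j _ => mul_comm _ _)
    have hc' : ∀ j, c j = (∑ τ, w τ * f (uv τ (Fin.castAdd s j))) + (p:B) * d₂ (Fin.castAdd s j) := by
      intro j
      have := h2 (Fin.castAdd s j)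
      simpa [Fin.append_left] using this
    have hd' : ∀ i, d i = (∑ τ, w τ * f (uv τ (Fin.natAdd r i))) + (p:B) * d₂ (Fin.natAdd r i) := by
      intro i
      have := h2 (Fin.natAdd r i)
      simpa [Fin.append_right] using this
    have h1' : ∀ τ t, (p:A) ∣ (∑ j, e j t * uv τ (Fin.castAdd s j)) + ∑ i, a t i * uv τ (Fin.natAdd r i) := by
      intro τ t
      obtain ⟨H, hH⟩ := h1 τ t
      refine ⟨H, ?_⟩
      rw [← hH, Fin.sum_univ_add]
      simp only [Fin.append_left, Fin.append_right]
    set X : Fin (r₂ + r) → Fin s → A := Fin.append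
      (fun τ i => (∑ j, uv τ (Fin.castAdd s j) * x j i) + (p : A) ^ (m+1) * uv τ (Fin.natAdd r i))
      (fun j i => (p : A) * x j i) with hX
    refine ⟨r₂ + r, Fin.append w (fun j => d₂ (Fin.castAdd s j)), X,
      fun i => d₂ (Fin.natAdd r i), ?_, ?_⟩
    · -- divisibility
      intro jj t
      refine Fin.addCases ?_ ?_ jj
      · intro τ
        obtain ⟨H, hH⟩ := h1' τ t
        refine ⟨H, ?_⟩
        have expand : ∑ i, a t i * X (Fin.castAdd r τ) i
            = (p:A)^(m+1) * ((∑ j, e j t * uv τ (Fin.castAdd s j))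
              + ∑ i, a t i * uv τ (Fin.natAdd r i)) := by
          calc ∑ i, a t i * X (Fin.castAdd r τ) i
              = ∑ i, (∑ j, a t i * (uv τ (Fin.castAdd s j) * x j i))
                + ∑ i, a t i * ((p:A)^(m+1) * uv τ (Fin.natAdd r i)) := by
                rw [← Finset.sum_add_distrib]
                refine Finset.sum_congr rfl fun i _ => ?_
                rw [hX]
                simp only [Fin.append_left]
                rw [mul_add, Finset.mul_sum]
            _ = ∑ j, (∑ i, a t i * (uv τ (Fin.castAdd s j) * x j i))
                + ∑ i, a t i * ((p:A)^(m+1) * uv τ (Fin.natAdd r i)) := by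
                congr 1
                exact Finset.sum_comm
            _ = ∑ j, uv τ (Fin.castAdd s j) * ((p:A)^(m+1) * e j t)
                + (p:A)^(m+1) * ∑ i, a t i * uv τ (Fin.natAdd r i) := by
                congr 1
                · refine Finset.sum_congr rfl fun j _ => ?_
                  rw [← he j t, Finset.mul_sum]
                  exact Finset.sum_congr rfl fun i _ => by ring
                · rw [Finset.mul_sum]
                  exact Finset.sum_congr rfl fun i _ => by ring
            _ = (p:A)^(m+1) * ((∑ j, e j t * uv τ (Fin.castAdd s j))
                + ∑ i, a t i * uv τ (Fin.natAdd r i)) := by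
                rw [mul_add]
                congr 1
                rw [Finset.mul_sum]
                exact Finset.sum_congr rfl fun j _ => by ring
        rw [expand, hH]
        ring
      · intro j
        refine ⟨e j t, ?_⟩
        have : ∑ i, a t i * X (Fin.natAdd r₂ j) i = (p:A) * ∑ i, a t i * x j i := by
          rw [hX]
          simp only [Fin.append_right]
          rw [Finset.mul_sum]
          exact Finset.sum_congr rfl fun i _ => by ring
        rw [this, he j t]
        ring
    · -- decomposition
      intro i
      have hfL : ∀ τ, f (X (Fin.castAdd r τ) i)
          = (∑ j, f (uv τ (Fin.castAdd s j)) * f (x j i))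
            + (p:B)^(m+1) * f (uv τ (Fin.natAdd r i)) := by
        intro τ
        rw [hX]
        simp only [Fin.append_left]
        rw [map_add, map_sum, map_mul, map_pow, hfp]
        congr 1
        exact Finset.sum_congr rfl fun j _ => by rw [map_mul]
      have hfR : ∀ j, f (X (Fin.natAdd r₂ j) i) = (p:B) * f (x j i) := by
        intro j
        rw [hX]
        simp only [Fin.append_right]
        rw [map_mul, hfp]
      calc b i = ∑ j, c j * f (x j i) + (p:B)^(m+1) * d i := hbd i
        _ = ∑ j, (((∑ τ, w τ * f (uv τ (Fin.castAdd s j))) + (p:B) * d₂ (Fin.castAdd s j)) * f (x j i))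
            + (p:B)^(m+1) * ((∑ τ, w τ * f (uv τ (Fin.natAdd r i))) + (p:B) * d₂ (Fin.natAdd r i)) := by
            rw [← hd' i]
            congr 1
            exact Finset.sum_congr rfl fun j _ => by rw [← hc' j]
        _ = (∑ j, (∑ τ, w τ * f (uv τ (Fin.castAdd s j))) * f (x j i))
            + (∑ j, ((p:B) * d₂ (Fin.castAdd s j)) * f (x j i))
            + ((p:B)^(m+1) * (∑ τ, w τ * f (uv τ (Fin.natAdd r i)))
              + (p:B)^(m+1) * ((p:B) * d₂ (Fin.natAdd r i))) := by
            rw [mul_add, ← Finset.sum_add_distrib]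
            congr 1
            exact Finset.sum_congr rfl fun j _ => add_mul _ _ _
        _ = (∑ τ, w τ * ∑ j, f (uv τ (Fin.castAdd s j)) * f (x j i))
            + (∑ j, ((p:B) * d₂ (Fin.castAdd s j)) * f (x j i))
            + ((∑ τ, w τ * ((p:B)^(m+1) * f (uv τ (Fin.natAdd r i))))
              + (p:B)^(m+1) * ((p:B) * d₂ (Fin.natAdd r i))) := by
            rw [swap_sum]
            congr 2
            rw [Finset.mul_sum]
            exact Finset.sum_congr rfl fun τ _ => by ring
        _ = ∑ τ, w τ * f (X (Fin.castAdd r τ) i)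
            + ∑ j, d₂ (Fin.castAdd s j) * f (X (Fin.natAdd r₂ j) i)
            + (p:B)^(m+1+1) * d₂ (Fin.natAdd r i) := by
            have e1 : ∑ τ, w τ * f (X (Fin.castAdd r τ) i)
                = ∑ τ, (w τ * ∑ j, f (uv τ (Fin.castAdd s j)) * f (x j i)
                  + w τ * ((p:B)^(m+1) * f (uv τ (Fin.natAdd r i)))) := by
              refine Finset.sum_congr rfl fun τ _ => ?_
              rw [hfL τ, mul_add]
            rw [e1, Finset.sum_add_distrib]
            have e2 : ∑ j, d₂ (Fin.castAdd s j) * f (X (Fin.natAdd r₂ j) i)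
                = ∑ j, ((p:B) * d₂ (Fin.castAdd s j)) * f (x j i) := by
              refine Finset.sum_congr rfl fun j _ => ?_
              rw [hfR j]
              ring
            rw [e2]
            ring
        _ = ∑ jj, (Fin.append w (fun j => d₂ (Fin.castAdd s j))) jj * f (X jj i)
            + (p:B)^(m+1+1) * d₂ (Fin.natAdd r i) := by
            rw [Fin.sum_univ_add]
            simp only [Fin.append_left, Fin.append_right]

theorem final
    [IsAdicComplete (Ideal.span {(p : B)}) B]
    [IsNoetherianRing A]
    (halg : ∀ a : A,
      algebraMap (A ⧸ Ideal.span {(p : A)}) (B ⧸ Ideal.span {(p : B)})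
          (Ideal.Quotient.mk _ a)
        = Ideal.Quotient.mk _ (algebraMap A B a))
    (hflat : Module.Flat (A ⧸ Ideal.span {(p : A)}) (B ⧸ Ideal.span {(p : B)}))
    (hBtf : ∀ b : B, (p : B) * b = 0 → b = 0) :
    Module.Flat A B := by
  classical
  apply flat_of_trivial
  intro s a b hrel
  set f := algebraMap A B with hf
  have hfp : f (p : A) = (p : B) := by rw [map_natCast]
  have hab : ∑ i, f (a i) * b i = 0 := by
    rw [← hrel]
    exact Finset.sum_congr rfl fun i _ => (Algebra.smul_def _ _).symm
  -- the kernel of the relation over A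
  set π : (Fin s → A) →ₗ[A] (Fin 1 → A) := LinearMap.pi (fun _ => dotL a) with hπ
  have hπa : ∀ v t, π v t = ∑ i, a i * v i := by
    intro v t
    rw [hπ]
    simp [LinearMap.pi_apply, dotL_apply]
  obtain ⟨N, kg, hkg⟩ := Submodule.fg_iff_exists_fin_generating_family.mp
    (IsNoetherian.noetherian (LinearMap.ker π))
  have hkgrel : ∀ l, ∑ i, a i * kg l i = 0 := by
    intro l
    have : kg l ∈ LinearMap.ker π := by
      rw [← hkg]
      exact Submodule.subset_span (Set.mem_range_self l)
    have h0 := congr_fun (LinearMap.mem_ker.mp this) 0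
    rw [hπa] at h0
    exact h0
  obtain ⟨k₁, hAR1⟩ := AR_maps π p
  set gmap : (Fin N → A) →ₗ[A] (Fin s → A) :=
    LinearMap.pi (fun i => dotL (fun l => kg l i)) with hg
  have hga : ∀ α i, gmap α i = ∑ l, kg l i * α l := by
    intro α i
    rw [hg]
    simp [LinearMap.pi_apply, dotL_apply]
  obtain ⟨k₂, hAR2⟩ := AR_maps gmap p
  -- approximation of b by combinations of the generators
  have happrox : ∀ n : ℕ, ∃ (w : Fin N → B) (d : Fin s → B),
      ∀ i, b i = (∑ l, w l * f (kg l i)) + (p : B) ^ (n + 1) * d i := by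
    intro n
    obtain ⟨r, c, x, d, hdvd, hdec⟩ := key p halg hflat hBtf (n + k₁) 1 s (fun _ => a) b
      (fun t => by rw [hab]; exact dvd_zero _)
    have hARapp : ∀ j, ∃ (y wv : Fin s → A), π y = 0 ∧ x j = y + (p : A) ^ (n + 1) • wv := by
      intro j
      refine hAR1 (n + 1) (x j) (fun t => ?_)
      have heq : n + 1 + k₁ = n + k₁ + 1 := by omega
      rw [heq, hπa]
      exact hdvd j 0
    choose y wv hy1 hy2 using hARapp
    have hmemy : ∀ j, ∃ α : Fin N → A, ∑ l, α l • kg l = y j := by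
      intro j
      have : y j ∈ LinearMap.ker π := LinearMap.mem_ker.mpr (hy1 j)
      rw [← hkg] at this
      exact (Submodule.mem_span_range_iff_exists_fun A).mp this
    choose α hα using hmemy
    refine ⟨fun l => ∑ j, c j * f (α j l),
      fun i => (∑ j, c j * f (wv j i)) + (p : B) ^ k₁ * d i, fun i => ?_⟩
    have hxji : ∀ j, f (x j i) = (∑ l, f (α j l) * f (kg l i)) + (p : B) ^ (n + 1) * f (wv j i) := by
      intro j
      have e1 : x j i = (∑ l, α j l * kg l i) + (p : A) ^ (n + 1) * wv j i := by
        have := congr_fun (hy2 j) i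
        rw [Pi.add_apply, Pi.smul_apply, smul_eq_mul] at this
        rw [this]
        congr 1
        have := congr_fun (hα j) i
        rw [Finset.sum_apply] at this
        rw [← this]
        exact Finset.sum_congr rfl fun l _ => by rw [Pi.smul_apply, smul_eq_mul]
      rw [e1, map_add, map_sum, map_mul, map_pow, hfp]
      congr 1
      exact Finset.sum_congr rfl fun l _ => by rw [map_mul]
    calc b i = ∑ j, c j * f (x j i) + (p : B) ^ (n + k₁ + 1) * d i := hdec i
      _ = ∑ j, (c j * ∑ l, f (α j l) * f (kg l i) + c j * ((p : B) ^ (n + 1) * f (wv j i)))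
          + (p : B) ^ (n + k₁ + 1) * d i := by
          congr 1
          refine Finset.sum_congr rfl fun j _ => ?_
          rw [hxji j, mul_add]
      _ = (∑ j, c j * ∑ l, f (α j l) * f (kg l i)) + (∑ j, c j * ((p : B) ^ (n + 1) * f (wv j i)))
          + (p : B) ^ (n + k₁ + 1) * d i := by
          rw [Finset.sum_add_distrib]
      _ = (∑ l, (∑ j, c j * f (α j l)) * f (kg l i))
          + ((p : B) ^ (n + 1) * ∑ j, c j * f (wv j i)) + (p : B) ^ (n + k₁ + 1) * d i := by
          congr 1
          congr 1
          · exact (swap_sum c (fun j l => f (α j l)) (fun l => f (kg l i))).symm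
          · rw [Finset.mul_sum]
            exact Finset.sum_congr rfl fun j _ => by ring
      _ = (∑ l, (∑ j, c j * f (α j l)) * f (kg l i))
          + (p : B) ^ (n + 1) * ((∑ j, c j * f (wv j i)) + (p : B) ^ k₁ * d i) := by
          ring
  -- correction of approximate solutions
  have hdiamond : ∀ (n : ℕ) (ω : Fin N → B),
      (∀ i, (p : B) ^ (n + k₂ + 1) ∣ ∑ l, ω l * f (kg l i)) →
      ∃ ω' : Fin N → B, (∀ i, ∑ l, ω' l * f (kg l i) = ∑ l, ω l * f (kg l i)) ∧
        (∀ l, (p : B) ^ n ∣ ω' l) := by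
    intro n ω hω
    obtain ⟨r, c, ux, d, hdvd, hdec⟩ := key p halg hflat hBtf (n + k₂) s N
      (fun i l => kg l i) ω
      (fun t => by
        have e : ∑ l, f (kg l t) * ω l = ∑ l, ω l * f (kg l t) :=
          Finset.sum_congr rfl fun l _ => mul_comm _ _
        rw [e]
        exact hω t)
    have hARapp : ∀ j, ∃ (lam mu : Fin N → A), gmap lam = 0 ∧ ux j = lam + (p : A) ^ (n + 1) • mu := by
      intro j
      refine hAR2 (n + 1) (ux j) (fun t => ?_)
      have heq : n + 1 + k₂ = n + k₂ + 1 := by omega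
      rw [heq, hga]
      exact hdvd j t
    choose lam mu hlam hmu using hARapp
    refine ⟨fun l => (p : B) ^ n * ((p : B) * (∑ j, c j * f (mu j l)) + (p : B) ^ (k₂ + 1) * d l),
      fun i => ?_, fun l => ⟨_, rfl⟩⟩
    set F : Fin N → B := fun l => f (kg l i) with hF
    set T : Fin r → B := fun j => ∑ l, f (mu j l) * F l with hT
    have hsumux : ∀ j, ∑ l, f (ux j l) * F l = (p : B) ^ (n + 1) * T j := by
      intro j
      have e1 : ∑ l, f (ux j l) * F l = f (gmap (ux j) i) := by
        rw [hga, map_sum]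
        exact Finset.sum_congr rfl fun l _ => by rw [map_mul, mul_comm]
      have e2 : gmap (ux j) i = (p : A) ^ (n + 1) * gmap (mu j) i := by
        rw [hmu j, map_add, map_smul]
        have h0 : gmap (lam j) i = 0 := by rw [hlam j]; rfl
        rw [Pi.add_apply, h0, zero_add, Pi.smul_apply, smul_eq_mul]
      have e3 : f (gmap (mu j) i) = T j := by
        rw [hga, map_sum, hT]
        exact Finset.sum_congr rfl fun l _ => by rw [map_mul, mul_comm]
      rw [e1, e2, map_mul, map_pow, hfp, e3]
    calc ∑ l, (p : B) ^ n * ((p : B) * (∑ j, c j * f (mu j l)) + (p : B) ^ (k₂ + 1) * d l) * F l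
        = ∑ l, ((p : B) ^ (n + 1) * ((∑ j, c j * f (mu j l)) * F l)
            + (p : B) ^ (n + k₂ + 1) * (d l * F l)) := by
          refine Finset.sum_congr rfl fun l _ => ?_
          ring
      _ = (p : B) ^ (n + 1) * ∑ l, (∑ j, c j * f (mu j l)) * F l
            + (p : B) ^ (n + k₂ + 1) * ∑ l, d l * F l := by
          rw [Finset.sum_add_distrib, ← Finset.mul_sum, ← Finset.mul_sum]
      _ = (p : B) ^ (n + 1) * ∑ j, c j * T j + (p : B) ^ (n + k₂ + 1) * ∑ l, d l * F l := by
          rw [swap_sum c (fun j l => f (mu j l)) F]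
      _ = ∑ j, c j * ((p : B) ^ (n + 1) * T j) + (p : B) ^ (n + k₂ + 1) * ∑ l, d l * F l := by
          congr 1
          rw [Finset.mul_sum]
          exact Finset.sum_congr rfl fun j _ => by ring
      _ = ∑ j, c j * (∑ l, f (ux j l) * F l) + (p : B) ^ (n + k₂ + 1) * ∑ l, d l * F l := by
          congr 1
          exact Finset.sum_congr rfl fun j _ => by rw [hsumux j]
      _ = (∑ l, (∑ j, c j * f (ux j l)) * F l) + (p : B) ^ (n + k₂ + 1) * ∑ l, d l * F l := by
          rw [swap_sum c (fun j l => f (ux j l)) F]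
      _ = ∑ l, ω l * F l := by
          rw [Finset.mul_sum, ← Finset.sum_add_distrib]
          refine Finset.sum_congr rfl fun l _ => ?_
          rw [hdec l]
          ring
  -- Cauchy sequence construction
  set P : ℕ → (Fin N → B) → Prop :=
    fun n v => ∀ i, (p : B) ^ (n + k₂ + 1) ∣ b i - ∑ l, v l * f (kg l i) with hP
  have h0 : ∃ v, P 0 v := by
    obtain ⟨w, d, hw⟩ := happrox k₂
    refine ⟨w, fun i => ⟨d i, ?_⟩⟩
    rw [hw i, Nat.zero_add]
    ring
  have hrec : ∀ n (vn : Fin N → B), P n vn → ∃ v', P (n+1) v' ∧ ∀ l, (p : B) ^ n ∣ v' l - vn l := by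
    intro n vn hvn
    obtain ⟨w, d, hw⟩ := happrox (n + k₂ + 1)
    have hdvd : ∀ i, (p : B) ^ (n + k₂ + 1) ∣ ∑ l, (w l - vn l) * f (kg l i) := by
      intro i
      have e1 : ∑ l, (w l - vn l) * f (kg l i)
          = (b i - ∑ l, vn l * f (kg l i)) - (b i - ∑ l, w l * f (kg l i)) := by
        calc ∑ l, (w l - vn l) * f (kg l i)
            = ∑ l, (w l * f (kg l i) - vn l * f (kg l i)) :=
              Finset.sum_congr rfl fun l _ => sub_mul _ _ _
          _ = ∑ l, w l * f (kg l i) - ∑ l, vn l * f (kg l i) := Finset.sum_sub_distrib _ _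
          _ = (b i - ∑ l, vn l * f (kg l i)) - (b i - ∑ l, w l * f (kg l i)) := by ring
      rw [e1]
      refine dvd_sub (hvn i) ?_
      have : b i - ∑ l, w l * f (kg l i) = (p : B) ^ (n + k₂ + 1 + 1) * d i := by
        rw [hw i]; ring
      rw [this]
      exact Dvd.dvd.mul_right (pow_dvd_pow _ (by omega)) _
    obtain ⟨ω', hω'1, hω'2⟩ := hdiamond n (fun l => w l - vn l) hdvd
    refine ⟨fun l => vn l + ω' l, fun i => ?_, fun l => by simpa using hω'2 l⟩
    have e2 : ∑ l, (vn l + ω' l) * f (kg l i)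
        = ∑ l, vn l * f (kg l i) + ∑ l, (w l - vn l) * f (kg l i) := by
      rw [← hω'1 i, ← Finset.sum_add_distrib]
      exact Finset.sum_congr rfl fun l _ => by ring
    have e3 : b i - ∑ l, (vn l + ω' l) * f (kg l i) = b i - ∑ l, w l * f (kg l i) := by
      rw [e2]
      have : ∑ l, vn l * f (kg l i) + ∑ l, (w l - vn l) * f (kg l i)
          = ∑ l, w l * f (kg l i) := by
        rw [← Finset.sum_add_distrib]
        exact Finset.sum_congr rfl fun l _ => by ring
      rw [this]
    rw [e3]
    refine ⟨d i, ?_⟩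
    rw [hw i]
    ring
  -- build the sequence
  choose F hF1 hF2 using hrec
  obtain ⟨v0, hv0⟩ := h0
  let V : ∀ n : ℕ, {v : Fin N → B // P n v} := fun n =>
    Nat.rec ⟨v0, hv0⟩ (fun n prev => ⟨F n prev.1 prev.2, hF1 n prev.1 prev.2⟩) n
  have hVstep : ∀ n l, (p : B) ^ n ∣ (V (n+1)).1 l - (V n).1 l := fun n l =>
    hF2 n (V n).1 (V n).2 l
  have hVle : ∀ m n, m ≤ n → ∀ l, (p : B) ^ m ∣ (V n).1 l - (V m).1 l := by
    intro m n hmn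
    induction n, hmn using Nat.le_induction with
    | base => intro l; simp
    | succ n hmn IH =>
      intro l
      have e : (V (n+1)).1 l - (V m).1 l = ((V (n+1)).1 l - (V n).1 l) + ((V n).1 l - (V m).1 l) := by
        ring
      rw [e]
      exact dvd_add (dvd_trans (pow_dvd_pow _ hmn) (hVstep n l)) (IH l)
  -- take the limit
  have hlim : ∀ l : Fin N, ∃ u : B, ∀ n, (p : B) ^ n ∣ (V n).1 l - u := by
    intro l
    have hcau : ∀ {m n : ℕ}, m ≤ n →
        (fun n => (V n).1 l) m ≡ (fun n => (V n).1 l) n [SMOD (Ideal.span {(p : B)} ^ m • ⊤ : Submodule B B)] := by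
      intro m n hmn
      rw [SModEq.sub_mem]
      rw [mem_pow_smul_top_iff]
      obtain ⟨z, hz⟩ := hVle m n hmn l
      exact ⟨-z, by rw [smul_eq_mul]; linear_combination -hz⟩
    obtain ⟨u, hu⟩ := IsPrecomplete.prec (IsAdicComplete.toIsPrecomplete) hcau
    refine ⟨u, fun n => ?_⟩
    have := (SModEq.sub_mem).mp (hu n)
    rw [mem_pow_smul_top_iff] at this
    obtain ⟨z, hz⟩ := this
    exact ⟨z, by rw [← smul_eq_mul, ← hz]⟩
  choose u hu using hlim
  -- the residual vanishes
  have hres : ∀ i, b i = ∑ l, u l * f (kg l i) := by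
    intro i
    have hdvd : ∀ n : ℕ, (p : B) ^ n ∣ b i - ∑ l, u l * f (kg l i) := by
      intro n
      have e : b i - ∑ l, u l * f (kg l i)
          = (b i - ∑ l, (V n).1 l * f (kg l i)) + ∑ l, ((V n).1 l - u l) * f (kg l i) := by
        have e0 : ∑ l, ((V n).1 l - u l) * f (kg l i)
            = ∑ l, (V n).1 l * f (kg l i) - ∑ l, u l * f (kg l i) := by
          calc ∑ l, ((V n).1 l - u l) * f (kg l i)
              = ∑ l, ((V n).1 l * f (kg l i) - u l * f (kg l i)) :=
                Finset.sum_congr rfl fun l _ => sub_mul _ _ _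
            _ = ∑ l, (V n).1 l * f (kg l i) - ∑ l, u l * f (kg l i) := Finset.sum_sub_distrib _ _
        rw [e0]
        ring
      rw [e]
      refine dvd_add (dvd_trans (pow_dvd_pow _ (by omega)) ((V n).2 i)) ?_
      refine Finset.dvd_sum fun l _ => ?_
      exact Dvd.dvd.mul_right (hu l n) _
    have hzero : b i - ∑ l, u l * f (kg l i) = 0 := by
      refine IsHausdorff.haus (I := Ideal.span {(p : B)}) (M := B)
        (IsAdicComplete.toIsHausdorff) _ fun n => ?_
      rw [SModEq.zero, mem_pow_smul_top_iff]
      obtain ⟨z, hz⟩ := hdvd n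
      exact ⟨z, by rw [smul_eq_mul, ← hz]⟩
    linear_combination hzero
  exact ⟨N, fun l i => kg l i, u, hkgrel, fun i => by
    rw [hres i]
    exact Finset.sum_congr rfl fun l _ => by rw [Algebra.smul_def, mul_comm]⟩

end Main

end Statement7Aux

/-- Let `p` be a prime and let `A → B` be a ring homomorphism such
that `A` and `B` are `p`-adically complete and `p`-torsion-free, `A` is Noetherian, and
the induced map `A/pA → B/pB` is flat.  Then `A → B` is flat.

(The algebra structure of `B ⧸ pB` over `A ⧸ pA` is pinned down by the hypothesis
`halg` to be the one induced by `A → B`.) -/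
theorem statement_7
    (p : ℕ) (hp : p.Prime)
    (A B : Type*) [CommRing A] [CommRing B] [Algebra A B]
    [IsAdicComplete (Ideal.span {(p : A)}) A]
    [IsAdicComplete (Ideal.span {(p : B)}) B]
    (hAtf : ∀ a : A, (p : A) * a = 0 → a = 0)
    (hBtf : ∀ b : B, (p : B) * b = 0 → b = 0)
    [IsNoetherianRing A]
    [Algebra (A ⧸ Ideal.span {(p : A)}) (B ⧸ Ideal.span {(p : B)})]
    (halg : ∀ a : A,
      algebraMap (A ⧸ Ideal.span {(p : A)}) (B ⧸ Ideal.span {(p : B)})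
          (Ideal.Quotient.mk _ a)
        = Ideal.Quotient.mk _ (algebraMap A B a))
    (hflat : Module.Flat (A ⧸ Ideal.span {(p : A)}) (B ⧸ Ideal.span {(p : B)})) :
    Module.Flat A B :=
  Statement7Aux.final p halg hflat hBtf
end

section
/- Let S → R be a surjective ring homomorphism whose kernel I satisfies I² = 0. If R is coherent and I is finitely presented as an R-module, then S is coherent. -/
set_option synthInstance.maxHeartbeats 1000000
set_option maxHeartbeats 1000000

/-- A commutative ring is *coherent* if every finitely generated ideal is finitely
presented as a module. -/
def IsCoherentRing (R : Type*) [CommRing R] : Prop :=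
  ∀ I : Ideal R, I.FG → Module.FinitePresentation R I

section Aux

open Function LinearMap

/-- If `S → R` is a surjective map of rings with `R` finitely presented as an `S`-module,
then every finitely presented `R`-module is finitely presented as an `S`-module. -/
lemma aux_fp_descend {S R M : Type*} [CommRing S] [CommRing R] [Algebra S R]
    (hsurj : Function.Surjective (algebraMap S R))
    [Module.FinitePresentation S R]
    [AddCommGroup M] [Module R M] [Module S M] [IsScalarTower S R M]
    [Module.FinitePresentation R M] : Module.FinitePresentation S M := by
  obtain ⟨n, p, hp⟩ := Module.Finite.exists_fin' R M
  have hkerp : (LinearMap.ker p).FG := Module.FinitePresentation.fg_ker p hp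
  have hIfg : (LinearMap.ker (Algebra.linearMap S R)).FG :=
    Module.FinitePresentation.fg_ker (Algebra.linearMap S R) hsurj
  let q : (Fin n → S) →ₗ[S] (Fin n → R) :=
    LinearMap.pi fun i => (Algebra.linearMap S R).comp (LinearMap.proj i)
  have hq : Function.Surjective q := by
    intro w
    choose v hv using fun i => hsurj (w i)
    exact ⟨v, funext hv⟩
  have hkerq : (LinearMap.ker q).FG := by
    have : LinearMap.ker q =
        Submodule.pi Set.univ (fun _ : Fin n => LinearMap.ker (Algebra.linearMap S R)) := by
      ext x
      simp [q, Submodule.mem_pi, funext_iff]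
    rw [this]
    exact Submodule.fg_pi fun _ => hIfg
  let t : (Fin n → S) →ₗ[S] M := (p.restrictScalars S).comp q
  have ht : Function.Surjective t := hp.comp hq
  refine Module.finitePresentation_of_surjective t ht ?_
  have hker : LinearMap.ker t = (LinearMap.ker (p.restrictScalars S)).comap q :=
    LinearMap.ker_comp _ _
  apply Submodule.fg_of_fg_map_of_fg_inf_ker q
  · rw [hker, Submodule.map_comap_eq_of_surjective hq, LinearMap.ker_restrictScalars]
    exact Submodule.fg_restrictScalars hkerp hsurj
  · have hle : LinearMap.ker q ≤ LinearMap.ker t := by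
      intro x hx
      simp only [LinearMap.mem_ker] at hx ⊢
      simp [t, hx]
    rw [inf_eq_right.mpr hle]
    exact hkerq

/-- Over a coherent ring, finitely generated submodules of finite free modules are
finitely presented. -/
lemma aux_coherent_pi {R : Type*} [CommRing R] (hR : IsCoherentRing R) :
    ∀ (n : ℕ) (N : Submodule R (Fin n → R)), N.FG → Module.FinitePresentation R N := by
  intro n
  induction n with
  | zero =>
    intro N hN
    have : Subsingleton N := ⟨fun a b => Subtype.ext (Subsingleton.elim _ _)⟩
    refine Module.finitePresentation_of_surjective (0 : (Fin 0 → R) →ₗ[R] N)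
      (fun x => ⟨0, Subsingleton.elim _ _⟩) ?_
    rw [LinearMap.ker_zero]
    exact Module.finite_def.mp inferInstance
  | succ n ih =>
    intro N hN
    let π : (Fin (n + 1) → R) →ₗ[R] R := LinearMap.proj (Fin.last n)
    let g : (Fin (n + 1) → R) →ₗ[R] (Fin n → R) :=
      LinearMap.pi fun i => LinearMap.proj i.castSucc
    let J : Ideal R := N.map π
    haveI hJ : Module.FinitePresentation R J := hR J (hN.map π)
    let φ : N →ₗ[R] J :=
      LinearMap.codRestrict J (π.comp N.subtype) fun x => Submodule.mem_map_of_mem x.2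
    have hφ : Function.Surjective φ := by
      rintro ⟨y, hy⟩
      obtain ⟨x, hx, rfl⟩ := hy
      exact ⟨⟨x, hx⟩, rfl⟩
    haveI : Module.Finite R N := Module.Finite.iff_fg.mpr hN
    have hkfg : (LinearMap.ker φ).FG := Module.FinitePresentation.fg_ker φ hφ
    let h : (LinearMap.ker φ) →ₗ[R] (Fin n → R) :=
      (g.comp N.subtype).comp (LinearMap.ker φ).subtype
    have hcoe : ∀ x : LinearMap.ker φ, (x : N) ∈ LinearMap.ker φ := fun x => x.2
    have hlast : ∀ x : LinearMap.ker φ, ((x : N) : Fin (n + 1) → R) (Fin.last n) = 0 := by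
      intro x
      have := x.2
      rw [LinearMap.mem_ker] at this
      exact congrArg Subtype.val this
    have hinj : Function.Injective h := by
      intro x y e
      refine Subtype.ext (Subtype.ext (funext fun i => ?_))
      refine Fin.lastCases ?_ (fun j => ?_) i
      · rw [hlast x, hlast y]
      · exact congrFun e j
    let N' := LinearMap.range h
    have hN'fg : N'.FG := by
      have : N' = (LinearMap.ker φ).map (g.comp N.subtype) := by
        rw [← Submodule.range_subtype (LinearMap.ker φ), ← LinearMap.range_comp]
      rw [this]
      exact hkfg.map _
    haveI : Module.FinitePresentation R N' := ih N' hN'fg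
    let e : LinearMap.ker φ ≃ₗ[R] N' := LinearEquiv.ofInjective h hinj
    haveI : Module.FinitePresentation R (LinearMap.ker φ) :=
      Module.FinitePresentation.of_equiv (R := R) (M := N') (N := LinearMap.ker φ) e.symm
    exact Module.finitePresentation_of_ker φ hφ

/-- Over a coherent ring, finitely generated submodules of finitely presented modules are
finitely presented. -/
lemma aux_coherent_submodule {R M : Type*} [CommRing R] (hR : IsCoherentRing R)
    [AddCommGroup M] [Module R M] [Module.FinitePresentation R M]
    (N : Submodule R M) (hN : N.FG) : Module.FinitePresentation R N := by
  obtain ⟨n, p, hp⟩ := Module.Finite.exists_fin' R M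
  have hkerp : (LinearMap.ker p).FG := Module.FinitePresentation.fg_ker p hp
  set N' : Submodule R (Fin n → R) := N.comap p with hN'def
  have hle : LinearMap.ker p ≤ N' := fun x hx => by
    rw [LinearMap.mem_ker] at hx
    simp [hN'def, Submodule.mem_comap, hx]
  have hN'fg : N'.FG := by
    apply Submodule.fg_of_fg_map_of_fg_inf_ker p
    · rw [Submodule.map_comap_eq_of_surjective hp]; exact hN
    · rw [inf_eq_right.mpr hle]; exact hkerp
  haveI : Module.FinitePresentation R N' := aux_coherent_pi hR n N' hN'fg
  let ψ : N' →ₗ[R] N := p.restrict fun x hx => hx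
  have hψ : Function.Surjective ψ := by
    rintro ⟨y, hy⟩
    obtain ⟨x, rfl⟩ := hp y
    exact ⟨⟨x, hy⟩, rfl⟩
  refine Module.finitePresentation_of_surjective ψ hψ ?_
  have : LinearMap.ker ψ = (LinearMap.ker p).comap N'.subtype := by
    ext x
    simp only [LinearMap.mem_ker, Submodule.mem_comap]
    constructor
    · intro hx; exact congrArg Subtype.val hx
    · intro hx; exact Subtype.ext hx
  rw [this]
  apply Submodule.fg_of_fg_map_of_fg_inf_ker N'.subtype
  · rw [Submodule.map_comap_eq, Submodule.range_subtype, inf_eq_right.mpr hle]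
    exact hkerp
  · rw [Submodule.ker_subtype, inf_bot_eq]
    exact Submodule.fg_bot

end Aux

/-- Let `S → R` be a surjective ring homomorphism whose kernel `I`
satisfies `I² = 0`.  If `R` is coherent and `I` is finitely presented as an `R`-module,
then `S` is coherent.

(The `R`-module structure on `I = ker f` is pinned down by `hcompat` to be the one
induced along `f` from the `S`-module structure; it exists since `I² = 0`.) -/
theorem statement_8
    (S R : Type*) [CommRing S] [CommRing R]
    (f : S →+* R) (hf : Function.Surjective f)
    (hsq : (RingHom.ker f) ^ 2 = ⊥)
    [Module R (RingHom.ker f)]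
    (hcompat : ∀ (s : S) (x : RingHom.ker f), f s • x = s • x)
    (hR : IsCoherentRing R)
    (hker : Module.FinitePresentation R (RingHom.ker f)) :
    IsCoherentRing S := by
  letI := f.toAlgebra
  have halg : (algebraMap S R : S →+* R) = f := rfl
  have hsurj : Function.Surjective (algebraMap S R) := hf
  haveI tower : IsScalarTower S R (RingHom.ker f) := by
    refine ⟨fun s r x => ?_⟩
    rw [Algebra.smul_def, halg, mul_smul, hcompat]
  -- the kernel of `f` is a finitely generated ideal of `S`
  have hIfg : (RingHom.ker f).FG := by
    have h1 : (⊤ : Submodule R (RingHom.ker f)).FG := Module.finite_def.mp inferInstance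
    have h2 : ((⊤ : Submodule R (RingHom.ker f)).restrictScalars S).FG :=
      Submodule.fg_restrictScalars h1 hsurj
    rw [Submodule.restrictScalars_top] at h2
    exact (Submodule.fg_top _).mp h2
  -- `R` is finitely presented as an `S`-module
  haveI hRfp : Module.FinitePresentation S R := by
    refine Module.finitePresentation_of_surjective (Algebra.linearMap S R) hsurj ?_
    have hker' : LinearMap.ker (Algebra.linearMap S R) = RingHom.ker f := by
      ext x
      simp only [LinearMap.mem_ker, Algebra.linearMap_apply, halg, RingHom.mem_ker]
    rw [hker']
    exact hIfg
  intro J hJ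
  set J' : Ideal R := J.map f with hJ'def
  haveI : Module.FinitePresentation R J' := hR J' (hJ.map f)
  haveI : Module.FinitePresentation S J' := aux_fp_descend hsurj
  -- the natural map `J → J'`
  let φ : J →ₗ[S] J' :=
    { toFun := fun x => ⟨f x.1, Ideal.mem_map_of_mem f x.2⟩
      map_add' := fun x y => Subtype.ext (map_add f _ _)
      map_smul' := fun s x => Subtype.ext (by
        show f (s * x.1) = s • (f x.1)
        rw [map_mul, Algebra.smul_def, halg]) }
  have hφ : Function.Surjective φ := by
    rintro ⟨y, hy⟩
    rw [hJ'def, Ideal.mem_map_iff_of_surjective f hf] at hy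
    obtain ⟨x, hxJ, rfl⟩ := hy
    exact ⟨⟨x, hxJ⟩, rfl⟩
  haveI : Module.Finite S J := Module.Finite.iff_fg.mpr hJ
  have hkfg : (LinearMap.ker φ).FG := Module.FinitePresentation.fg_ker φ hφ
  -- `ker φ` as an `R`-submodule of `ker f`
  let N : Submodule R (RingHom.ker f) :=
    { carrier := {x | (x : S) ∈ J}
      add_mem' := fun ha hb => J.add_mem ha hb
      zero_mem' := J.zero_mem
      smul_mem' := by
        intro r x hx
        obtain ⟨s, rfl⟩ := hf r
        rw [hcompat]
        show (s • x : RingHom.ker f).1 ∈ J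
        exact J.smul_mem s hx }
  let e : LinearMap.ker φ ≃ₗ[S] N :=
    { toFun := fun x => ⟨⟨x.1.1, congrArg Subtype.val x.2⟩, x.1.2⟩
      map_add' := fun x y => rfl
      map_smul' := fun s x => rfl
      invFun := fun y => ⟨⟨y.1.1, y.2⟩, Subtype.ext y.1.2⟩
      left_inv := fun x => rfl
      right_inv := fun y => rfl }
  haveI : Module.Finite S (LinearMap.ker φ) := Module.Finite.iff_fg.mpr hkfg
  haveI : Module.Finite S N := Module.Finite.equiv e
  haveI : Module.Finite R N := Module.Finite.of_restrictScalars_finite S R N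
  have hNfg : N.FG := Module.Finite.iff_fg.mp inferInstance
  haveI : Module.FinitePresentation R N := aux_coherent_submodule hR N hNfg
  haveI : Module.FinitePresentation S N := aux_fp_descend hsurj
  haveI : Module.FinitePresentation S (LinearMap.ker φ) :=
    Module.finitePresentation_of_surjective e.symm.toLinearMap e.symm.surjective
      (by rw [LinearMap.ker_eq_bot.mpr e.symm.injective]; exact Submodule.fg_bot)
  exact Module.finitePresentation_of_ker φ hφ
end

section
/- Let R be a commutative ring and f ∈ R a non-zero-divisor. Assume the pair (R, f) satisfies the Artin–Rees property: for every inclusion M ⊆ N of finitely generated R-modules, the restriction to M of the f-adic topology on N equals the f-adic topology of M (i.e., for every n ≥ 1 there exists m ≥ 1 with M ∩ f^mN ⊆ f^nM). If R[1/f] and R/fR are coherent, then R is coherent. -/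
universe u

universe v

set_option synthInstance.maxHeartbeats 400000
set_option maxHeartbeats 1000000

open Pointwise

section Generic

variable {S : Type v} [CommRing S]

/-- Transport finite presentation along a linear equivalence. -/
lemma fp_of_equiv {M N : Type*} [AddCommGroup M] [Module S M] [AddCommGroup N] [Module S N]
    (e : M ≃ₗ[S] N) (h : Module.FinitePresentation S M) : Module.FinitePresentation S N :=
  haveI := h
  Module.finitePresentation_of_surjective e.toLinearMap e.surjective
    (by rw [LinearMap.ker_eq_bot.mpr e.injective]; exact Submodule.fg_bot)


/-- The kernel of the projection onto the first coordinate. -/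
noncomputable def kerProjEquiv (n : ℕ) :
    (LinearMap.ker (LinearMap.proj (0 : Fin (n+1)) : (Fin (n+1) → S) →ₗ[S] S)) ≃ₗ[S] (Fin n → S) where
  toFun x := fun i => x.1 i.succ
  map_add' x y := rfl
  map_smul' c x := rfl
  invFun y := ⟨Fin.cons 0 y, by simp [LinearMap.mem_ker]⟩
  left_inv x := by
    apply Subtype.ext
    funext i
    refine Fin.cases ?_ (fun j => ?_) i
    · have := x.2
      simp only [LinearMap.mem_ker, LinearMap.proj_apply] at this
      simp [this]
    · simp
  right_inv y := by funext i; simp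

/-- Over a coherent ring, any f.g. submodule of a finite free module is finitely presented. -/
lemma coherent_fp_submodule (hS : IsCoherentRing S) :
    ∀ (n : ℕ) (M : Type v) [AddCommGroup M] [Module S M] (e : M ≃ₗ[S] (Fin n → S))
      (Z : Submodule S M), Z.FG → Module.FinitePresentation S Z := by
  intro n
  induction n with
  | zero =>
    intro M _ _ e Z hZ
    haveI hsub : Subsingleton M := e.toEquiv.subsingleton
    have hsurj : Function.Surjective (0 : (Fin 0 → S) →ₗ[S] Z) := by
      intro x
      exact ⟨0, Subtype.ext (Subsingleton.elim _ _)⟩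
    exact Module.finitePresentation_of_surjective _ hsurj
      (by rw [LinearMap.ker_zero]; exact Module.Finite.fg_top)
  | succ n IH =>
    intro M _ _ e Z hZ
    -- transport to `Fin (n+1) → S`
    let Z₁ : Submodule S (Fin (n+1) → S) := Z.map e.toLinearMap
    have hZ₁ : Z₁.FG := hZ.map _
    have hZe : Module.FinitePresentation S Z₁ → Module.FinitePresentation S Z := by
      intro h
      exact @fp_of_equiv _ _ _ _ _ _ _ _ (Submodule.equivMapOfInjective e.toLinearMap e.injective Z).symm h
    apply hZe
    haveI : Module.Finite S Z₁ := Module.Finite.iff_fg.mpr hZ₁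
    -- the projection onto the first coordinate
    set p : (Fin (n+1) → S) →ₗ[S] S := LinearMap.proj 0 with hp
    set g : Z₁ →ₗ[S] S := p ∘ₗ Z₁.subtype with hg
    have hrange : (LinearMap.range g).FG := by
      rw [← Submodule.map_top]
      exact Submodule.FG.map _ Module.Finite.fg_top
    haveI hfpJ : Module.FinitePresentation S (LinearMap.range g) := hS _ hrange
    have hsurj : Function.Surjective g.rangeRestrict := LinearMap.surjective_rangeRestrict g
    have hkerfg : (LinearMap.ker g.rangeRestrict).FG :=
      Module.FinitePresentation.fg_ker _ hsurj
    rw [LinearMap.ker_rangeRestrict] at hkerfg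
    -- identify the kernel with a f.g. submodule of `ker p ≃ Fin n → S`
    have hkq : LinearMap.ker g = Submodule.comap Z₁.subtype (Z₁ ⊓ LinearMap.ker p) := by
      ext x
      simp [hg, LinearMap.mem_ker, Submodule.mem_comap, x.2]
    have hWle : Z₁ ⊓ LinearMap.ker p ≤ Z₁ := inf_le_left
    have hW : (Z₁ ⊓ LinearMap.ker p).FG := by
      have := hkerfg.map Z₁.subtype
      rwa [hkq, Submodule.map_comap_subtype, inf_of_le_right (inf_le_left)] at this
    set W := Z₁ ⊓ LinearMap.ker p with hWdef
    set W₂ : Submodule S (LinearMap.ker p) := Submodule.comap (LinearMap.ker p).subtype W with hW2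
    have hW₂ : W₂.FG := by
      apply Submodule.fg_of_fg_map_injective (LinearMap.ker p).subtype (Submodule.injective_subtype _)
      rwa [hW2, Submodule.map_comap_subtype, inf_of_le_right inf_le_right]
    have hIH : Module.FinitePresentation S W₂ :=
      IH (LinearMap.ker p) (kerProjEquiv n) W₂ hW₂
    haveI := hIH
    have hle : W ≤ LinearMap.ker p := inf_le_right
    have eW : W₂ ≃ₗ[S] W := Submodule.comapSubtypeEquivOfLe hle
    haveI h4 : Module.FinitePresentation S W := fp_of_equiv (S := S) (M := ↥W₂) (N := ↥W) eW hIH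
    have h5 : Module.FinitePresentation S (Submodule.comap Z₁.subtype W) :=
      fp_of_equiv (S := S) (M := ↥W) (N := ↥(Submodule.comap Z₁.subtype W)) (Submodule.comapSubtypeEquivOfLe hWle).symm h4
    have h6 : LinearMap.ker g.rangeRestrict = Submodule.comap Z₁.subtype W :=
      (LinearMap.ker_rangeRestrict g).trans hkq
    haveI : Module.FinitePresentation S (LinearMap.ker g.rangeRestrict) := h6 ▸ h5
    exact Module.finitePresentation_of_ker g.rangeRestrict hsurj

/-- Preimage of a f.g. submodule under a surjection with f.g. kernel is f.g. -/
lemma comap_fg {M N : Type*} [AddCommGroup M] [Module S M] [AddCommGroup N] [Module S N]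
    (q : M →ₗ[S] N) (hq : Function.Surjective q) (hker : (LinearMap.ker q).FG)
    {p : Submodule S N} (hp : p.FG) : (Submodule.comap q p).FG := by
  obtain ⟨s, hs⟩ := hp
  choose σ hσ using hq
  have himg : q '' (σ '' ↑s) = ↑s := by
    rw [Set.image_image]
    simp only [hσ, Set.image_id']
  have key : Submodule.comap q p = Submodule.span S (σ '' ↑s) ⊔ LinearMap.ker q := by
    apply le_antisymm
    · intro x hx
      rw [Submodule.mem_comap, ← hs] at hx
      have : q x ∈ Submodule.map q (Submodule.span S (σ '' ↑s)) := by
        rw [Submodule.map_span, himg]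
        exact hx
      obtain ⟨y, hy, hyx⟩ := this
      have : x - y ∈ LinearMap.ker q := by
        rw [LinearMap.mem_ker, map_sub, hyx, sub_self]
      have hx' : x = y + (x - y) := by abel
      rw [hx']
      exact Submodule.add_mem_sup hy this
    · apply sup_le
      · rw [Submodule.span_le]
        rintro _ ⟨a, ha, rfl⟩
        rw [SetLike.mem_coe, Submodule.mem_comap, hσ]
        rw [← hs]
        exact Submodule.subset_span ha
      · intro x hx
        rw [LinearMap.mem_ker] at hx
        rw [Submodule.mem_comap, hx]
        exact p.zero_mem
  rw [key]
  exact (Submodule.fg_span (s.finite_toSet.image σ)).sup hker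

end Generic

section Quot

variable {S : Type v} [CommRing S] {I : Ideal S}

/-- A finitely presented submodule of a finite free module over `S ⧸ I` is finitely
presented as an `S`-module (as the corresponding `S`-submodule). -/
lemma fp_restrict (hI : I.FG) {n : ℕ} (P : Submodule (S ⧸ I) (Fin n → S ⧸ I))
    (hP : Module.FinitePresentation (S ⧸ I) P) :
    Module.FinitePresentation S (P.restrictScalars S) := by
  classical
  haveI := hP
  obtain ⟨t, ht⟩ : (⊤ : Submodule (S ⧸ I) P).FG := Module.Finite.fg_top
  set l : ({x // x ∈ t} → S ⧸ I) →ₗ[S ⧸ I] P :=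
    Fintype.linearCombination (S ⧸ I) (fun i => (i : P)) with hl
  have hlsurj : Function.Surjective l := by
    rw [← LinearMap.range_eq_top, hl, Fintype.range_linearCombination]
    rw [Subtype.range_coe_subtype, Finset.setOf_mem, ht]
  have hlker : (LinearMap.ker l).FG := Module.FinitePresentation.fg_ker l hlsurj
  have halg : Function.Surjective (algebraMap S (S ⧸ I)) := by
    rw [Ideal.Quotient.algebraMap_eq]
    exact Ideal.Quotient.mk_surjective
  -- the coordinatewise quotient map
  set u : ({x // x ∈ t} → S) →ₗ[S] ({x // x ∈ t} → S ⧸ I) :=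
    LinearMap.pi (fun i => (Algebra.linearMap S (S ⧸ I)) ∘ₗ LinearMap.proj i) with hu
  have hu_apply : ∀ (x : {x // x ∈ t} → S) (i), u x i = algebraMap S (S ⧸ I) (x i) :=
    fun x i => rfl
  have husurj : Function.Surjective u := by
    intro y
    refine ⟨fun i => (halg (y i)).choose, funext fun i => ?_⟩
    rw [hu_apply]
    exact (halg (y i)).choose_spec
  have huker : (LinearMap.ker u).FG := by
    have : LinearMap.ker u = Submodule.pi Set.univ (fun _ => I) := by
      ext x
      simp only [LinearMap.mem_ker, Submodule.mem_pi, Set.mem_univ, forall_true_left]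
      constructor
      · intro h i
        have h2 := congrFun h i
        rw [hu_apply, Pi.zero_apply, Ideal.Quotient.algebraMap_eq,
          Ideal.Quotient.eq_zero_iff_mem] at h2
        exact h2
      · intro h
        funext i
        rw [hu_apply, Pi.zero_apply, Ideal.Quotient.algebraMap_eq,
          Ideal.Quotient.eq_zero_iff_mem]
        exact h i
    rw [this]
    exact Submodule.fg_pi (fun _ => hI)
  -- the composite, as an `S`-linear map into the restricted submodule
  set ρ : ({x // x ∈ t} → S) →ₗ[S] (P.restrictScalars S) :=
    { toFun := fun x => ⟨(l (u x) : Fin n → S ⧸ I), (l (u x)).2⟩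
      map_add' := by
        intro x y
        apply Subtype.ext
        simp only [map_add, Submodule.coe_add]
      map_smul' := by
        intro c x
        apply Subtype.ext
        show (l (u (c • x)) : Fin n → S ⧸ I) = c • (l (u x) : Fin n → S ⧸ I)
        have h1 : u (c • x) = (algebraMap S (S ⧸ I) c) • u x := by
          rw [map_smul, algebraMap_smul]
        rw [h1, map_smul]
        simp only [SetLike.val_smul, Submodule.coe_smul_of_tower, algebraMap_smul] } with hρ
  have hρ_apply : ∀ x, (ρ x : Fin n → S ⧸ I) = (l (u x) : Fin n → S ⧸ I) := fun _ => rfl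
  have hρsurj : Function.Surjective ρ := by
    rintro ⟨v, hv⟩
    obtain ⟨y, hy⟩ := hlsurj ⟨v, hv⟩
    obtain ⟨x, hx⟩ := husurj y
    exact ⟨x, Subtype.ext (by rw [hρ_apply, hx, hy])⟩
  have hρker : (LinearMap.ker ρ).FG := by
    have : LinearMap.ker ρ = Submodule.comap u ((LinearMap.ker l).restrictScalars S) := by
      ext x
      simp only [LinearMap.mem_ker, Submodule.mem_comap, Submodule.restrictScalars_mem]
      constructor
      · intro h
        have h2 : (ρ x : Fin n → S ⧸ I) = 0 := by rw [h]; rfl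
        rw [hρ_apply] at h2
        exact Subtype.ext h2
      · intro h
        apply Subtype.ext
        rw [hρ_apply, h]; rfl
    rw [this]
    apply comap_fg u husurj huker
    obtain ⟨w, hw⟩ := hlker
    refine ⟨w, ?_⟩
    rw [← hw, Submodule.restrictScalars_span S (S ⧸ I) halg]
  exact Module.finitePresentation_of_surjective ρ hρsurj hρker

end Quot

section MainPart

variable {R : Type u} [CommRing R] {f : R}

/-- The coordinatewise quotient map. -/
noncomputable def qmap (n : ℕ) : (Fin n → R) →ₗ[R] (Fin n → R ⧸ Ideal.span {f}) :=
  LinearMap.pi (fun i => (Algebra.linearMap R (R ⧸ Ideal.span {f})) ∘ₗ LinearMap.proj i)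

lemma qmap_apply (n : ℕ) (x : Fin n → R) (i : Fin n) :
    qmap (f := f) n x i = Ideal.Quotient.mk (Ideal.span {f}) (x i) := rfl

lemma ker_qmap (n : ℕ) :
    LinearMap.ker (qmap (f := f) n) = LinearMap.range (LinearMap.lsmul R (Fin n → R) f) := by
  ext x
  simp only [LinearMap.mem_ker, LinearMap.mem_range]
  constructor
  · intro h
    have h' : ∀ i, ∃ c, c * f = x i := by
      intro i
      have h2 := congrFun h i
      rw [qmap_apply, Pi.zero_apply, Ideal.Quotient.eq_zero_iff_mem,
        Ideal.mem_span_singleton'] at h2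
      exact h2
    refine ⟨fun i => (h' i).choose, funext fun i => ?_⟩
    have := (h' i).choose_spec
    simp only [LinearMap.lsmul_apply, Pi.smul_apply, smul_eq_mul]
    rw [mul_comm]
    exact this
  · rintro ⟨y, rfl⟩
    funext i
    rw [qmap_apply, Pi.zero_apply, Ideal.Quotient.eq_zero_iff_mem]
    simp only [LinearMap.lsmul_apply, Pi.smul_apply, smul_eq_mul]
    exact Ideal.mul_mem_right _ _ (Ideal.mem_span_singleton_self f)

/-- Key lemma: over our ring, the `f`-colon of a f.g. submodule of a finite free module
is finitely generated, thanks to coherence of `R ⧸ (f)`. -/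
lemma colon_fg (hf : f ∈ nonZeroDivisors R) (h2 : IsCoherentRing (R ⧸ Ideal.span {f}))
    {n : ℕ} {Z : Submodule R (Fin n → R)} (hZ : Z.FG) :
    (Submodule.comap (LinearMap.lsmul R (Fin n → R) f) Z).FG := by
  classical
  set B := R ⧸ Ideal.span {f} with hB
  have halg : Function.Surjective (algebraMap R B) := by
    rw [Ideal.Quotient.algebraMap_eq]
    exact Ideal.Quotient.mk_surjective
  obtain ⟨s, hs⟩ := hZ
  set q := qmap (f := f) n with hq
  -- the image of `Z` in `(R⧸f)ⁿ`, as a `B`-submodule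
  set Zb : Submodule B (Fin n → B) := Submodule.span B (⇑q '' ↑s) with hZb
  have hZbfg : Zb.FG := Submodule.fg_span (s.finite_toSet.image _)
  have hres : Zb.restrictScalars R = Z.map q := by
    rw [hZb, Submodule.restrictScalars_span R B halg, ← Submodule.map_span, hs]
  have hfpB : Module.FinitePresentation B Zb :=
    coherent_fp_submodule h2 n (Fin n → B) (LinearEquiv.refl B _) Zb hZbfg
  have hfpR : Module.FinitePresentation R (Zb.restrictScalars R) :=
    fp_restrict (Submodule.fg_span_singleton f) Zb hfpB
  rw [hres] at hfpR
  -- the kernel of `Z → (R⧸f)ⁿ` is f.g.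
  haveI : Module.Finite R Z := Module.Finite.iff_fg.mpr ⟨s, hs⟩
  set g : Z →ₗ[R] (Fin n → B) := q ∘ₗ Z.subtype with hg
  have hrange : LinearMap.range g = Z.map q := by
    rw [hg, LinearMap.range_comp, Submodule.range_subtype]
  haveI : Module.FinitePresentation R (LinearMap.range g) := hrange ▸ hfpR
  have hkerfg : (LinearMap.ker g).FG := by
    have := Module.FinitePresentation.fg_ker g.rangeRestrict (LinearMap.surjective_rangeRestrict g)
    rwa [LinearMap.ker_rangeRestrict] at this
  have hW : (Z ⊓ LinearMap.ker q).FG := by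
    have hkq : LinearMap.ker g = Submodule.comap Z.subtype (LinearMap.ker q) := by
      rw [hg, LinearMap.ker_comp]
    have := hkerfg.map Z.subtype
    rwa [hkq, Submodule.map_comap_subtype] at this
  -- now pull back along multiplication by `f`
  have hinj : Function.Injective (LinearMap.lsmul R (Fin n → R) f) := by
    intro x y hxy
    funext i
    have h3 := congrFun hxy i
    simp only [LinearMap.lsmul_apply, Pi.smul_apply, smul_eq_mul] at h3
    have h4 : (x i - y i) * f = 0 := by
      rw [sub_mul, mul_comm (x i) f, mul_comm (y i) f, h3, sub_self]
    have h5 := (mem_nonZeroDivisors_iff_right.mp hf) _ h4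
    exact sub_eq_zero.mp h5
  apply Submodule.fg_of_fg_map_injective _ hinj
  have hmc : Submodule.map (LinearMap.lsmul R (Fin n → R) f)
      (Submodule.comap (LinearMap.lsmul R (Fin n → R) f) Z)
      = Z ⊓ LinearMap.ker q := by
    rw [Submodule.map_comap_eq, ker_qmap, inf_comm]
  rw [hmc]
  exact hW

lemma colon_pow_fg (hf : f ∈ nonZeroDivisors R) (h2 : IsCoherentRing (R ⧸ Ideal.span {f}))
    {n : ℕ} {Z : Submodule R (Fin n → R)} (hZ : Z.FG) (m : ℕ) :
    (Submodule.comap (LinearMap.lsmul R (Fin n → R) (f ^ m)) Z).FG := by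
  induction m with
  | zero =>
    have h0 : LinearMap.lsmul R (Fin n → R) (f ^ 0) = LinearMap.id := by
      ext x
      simp
    rw [h0, Submodule.comap_id]
    exact hZ
  | succ m IH =>
    have hcomp : LinearMap.lsmul R (Fin n → R) (f ^ (m+1))
        = (LinearMap.lsmul R (Fin n → R) (f ^ m)) ∘ₗ (LinearMap.lsmul R (Fin n → R) f) := by
      apply LinearMap.ext
      intro x
      show (f ^ (m+1)) • x = (f ^ m) • (f • x)
      rw [smul_smul, ← pow_succ]
    rw [hcomp, Submodule.comap_comp]
    exact colon_fg hf h2 IH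


/-- Using coherence of the localization, find a f.g. submodule of the kernel which is
cofinal up to powers of `f`. -/
lemma exists_fg_approx (hf : f ∈ nonZeroDivisors R)
    (h1 : IsCoherentRing (Localization.Away f)) {n : ℕ} (g : Fin n → R) :
    ∃ K' : Submodule R (Fin n → R), K'.FG ∧
      K' ≤ LinearMap.ker (Fintype.linearCombination R g) ∧
      ∀ x ∈ LinearMap.ker (Fintype.linearCombination R g),
        ∃ e : ℕ, (f ^ e) • x ∈ K' := by
  classical
  set A := Localization.Away f with hA
  set α : R →+* A := algebraMap R A with hα
  have hle : Submonoid.powers f ≤ nonZeroDivisors R := by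
    rintro x ⟨k, rfl⟩
    exact pow_mem hf k
  have hαinj : Function.Injective α := IsLocalization.injective A hle
  set Φ : (Fin n → R) →ₗ[R] (Fin n → A) :=
    LinearMap.pi (fun i => (Algebra.linearMap R A) ∘ₗ LinearMap.proj i) with hΦ
  have hΦ_apply : ∀ (x : Fin n → R) (i : Fin n), Φ x i = α (x i) := fun x i => rfl
  have hΦinj : Function.Injective Φ := by
    intro x y hxy
    funext i
    exact hαinj (congrFun hxy i)
  set π : (Fin n → R) →ₗ[R] R := Fintype.linearCombination R g with hπ
  set π' : (Fin n → A) →ₗ[A] A := Fintype.linearCombination A (fun i => α (g i)) with hπ'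
  have hcomm : ∀ x : Fin n → R, π' (Φ x) = α (π x) := by
    intro x
    rw [hπ', hπ, Fintype.linearCombination_apply, Fintype.linearCombination_apply, map_sum]
    refine Finset.sum_congr rfl (fun i _ => ?_)
    rw [hΦ_apply, smul_eq_mul, smul_eq_mul, map_mul]
  -- the kernel upstairs is f.g.
  have hJfg : (LinearMap.range π').FG := by
    rw [hπ', Fintype.range_linearCombination]
    exact Submodule.fg_span (Set.finite_range _)
  haveI : Module.FinitePresentation A (LinearMap.range π') := h1 _ hJfg
  have hTfg : (LinearMap.ker π').FG := by
    have := Module.FinitePresentation.fg_ker π'.rangeRestrict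
      (LinearMap.surjective_rangeRestrict π')
    rwa [LinearMap.ker_rangeRestrict] at this
  obtain ⟨t, ht⟩ := hTfg
  -- clear denominators in the generators
  have hsel : ∀ v : Fin n → A, ∃ (c : ℕ) (k : Fin n → R), Φ k = (f ^ c) • v := by
    intro v
    obtain ⟨b, hb⟩ := IsLocalization.exist_integer_multiples (Submonoid.powers f)
      Finset.univ v
    obtain ⟨c, hc⟩ := b.2
    have hc' : f ^ c = (b : R) := hc
    choose k hk using fun i => hb i (Finset.mem_univ i)
    refine ⟨c, k, funext fun i => ?_⟩
    rw [hΦ_apply, hk i, Pi.smul_apply, hc']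
  choose cf kf hkf using hsel
  set K' : Submodule R (Fin n → R) := Submodule.span R (kf '' ↑t) with hK'
  have hK'fg : K'.FG := Submodule.fg_span (t.finite_toSet.image _)
  have hkfK : ∀ v ∈ t, kf v ∈ LinearMap.ker π := by
    intro v hv
    have hvT : v ∈ LinearMap.ker π' := by
      rw [← ht]
      exact Submodule.subset_span hv
    rw [LinearMap.mem_ker] at hvT ⊢
    apply hαinj
    rw [← hcomm, hkf v, ← algebraMap_smul A (f ^ (cf v)) v, map_smul, hvT, smul_zero, map_zero]
  have hK'le : K' ≤ LinearMap.ker π := by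
    rw [hK', Submodule.span_le]
    rintro _ ⟨v, hv, rfl⟩
    exact hkfK v hv
  refine ⟨K', hK'fg, hK'le, ?_⟩
  intro x hx
  -- express `Φ x` in terms of the generators of the kernel upstairs
  have hxT : Φ x ∈ LinearMap.ker π' := by
    rw [LinearMap.mem_ker, hcomm, LinearMap.mem_ker.mp hx, map_zero]
  rw [← ht] at hxT
  obtain ⟨a, -, ha⟩ := Submodule.mem_span_finset.mp hxT
  obtain ⟨b, hb⟩ := IsLocalization.exist_integer_multiples (Submonoid.powers f) t a
  choose r hr using hb
  obtain ⟨D, hD⟩ := b.2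
  have hD' : f ^ D = (b : R) := hD
  set C := t.sup cf with hC
  refine ⟨D + C, ?_⟩
  have key : Φ ((f ^ (D + C)) • x)
      = Φ (∑ v ∈ t.attach, (r v.1 v.2) • ((f ^ (C - cf v.1)) • kf v.1)) := by
    rw [map_smul, ← ha, map_sum, Finset.smul_sum, ← Finset.sum_attach t
      (fun v => (f ^ (D + C)) • (a v • v))]
    refine Finset.sum_congr rfl (fun v _ => ?_)
    -- term-by-term computation
    rw [map_smul, map_smul, hkf v.1]
    -- goal: f^(D+C) • (a v • v) = r v • (f^(C - cf v) • (f^(cf v) • v))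
    rw [smul_smul (f ^ (C - cf v.1)) (f ^ (cf v.1)), ← pow_add]
    have hCc : C - cf v.1 + cf v.1 = C := Nat.sub_add_cancel (Finset.le_sup v.2)
    rw [hCc]
    -- now: f^(D+C) • (a v • v) = r v • (f^C • v)
    rw [← algebraMap_smul A (r v.1 v.2) ((f ^ C) • v.1), ← algebraMap_smul A (f ^ (D + C)) (a v.1 • v.1),
      ← algebraMap_smul A (f ^ C) v.1, smul_smul, smul_smul]
    congr 1
    rw [hr v.1 v.2, Algebra.smul_def, ← hD', pow_add, map_mul]
    ring
  have := hΦinj key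
  rw [this]
  apply Submodule.sum_mem
  intro v hv
  apply Submodule.smul_mem
  apply Submodule.smul_mem
  rw [hK']
  exact Submodule.subset_span ⟨v.1, v.2, rfl⟩

end MainPart



/-- Let `R` be a commutative ring and `f ∈ R` a non-zero-divisor.
Assume the pair `(R, f)` satisfies the Artin–Rees property: for every inclusion
`M ⊆ N` of finitely generated `R`-modules and every `n` there exists `m` with
`M ∩ f^m N ⊆ f^n M`.  If `R[1/f]` and `R/fR` are coherent, then `R` is coherent. -/
theorem statement_9
    (R : Type u) [CommRing R] (f : R) (hf : f ∈ nonZeroDivisors R)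
    (hAR : ∀ (N : Type u) [AddCommGroup N] [Module R N], Module.Finite R N →
      ∀ M : Submodule R N, M.FG → ∀ n : ℕ, ∃ m : ℕ,
        M ⊓ (Ideal.span {f ^ m} • (⊤ : Submodule R N)) ≤ Ideal.span {f ^ n} • M)
    (h1 : IsCoherentRing (Localization.Away f))
    (h2 : IsCoherentRing (R ⧸ Ideal.span {f})) :
    IsCoherentRing R := by
  classical
  intro I hI
  obtain ⟨s, hs⟩ := hI
  set n := s.card with hn
  set g : Fin n → R := fun i => (s.equivFin.symm i : R) with hg
  have hrangeg : Set.range g = ↑s := by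
    rw [hg]
    have h1' : Set.range (fun i : Fin n => (s.equivFin.symm i : R))
        = Set.range ((↑) : {x // x ∈ s} → R) :=
      Function.Surjective.range_comp s.equivFin.symm.surjective _
    rw [h1', Subtype.range_coe_subtype, Finset.setOf_mem]
  set π : (Fin n → R) →ₗ[R] R := Fintype.linearCombination R g with hπ
  have hrangeπ : LinearMap.range π = (I : Submodule R R) := by
    rw [hπ, Fintype.range_linearCombination, hrangeg]
    exact hs
  obtain ⟨K', hK'fg, hK'le, hK'⟩ := exists_fg_approx hf h1 g
  obtain ⟨m, hm⟩ := hAR (Fin n → R) inferInstance K' hK'fg 1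
  have hcancel : ∀ u w : Fin n → R, f • u = f • w → u = w := by
    intro u w huw
    funext i
    have h3 := congrFun huw i
    simp only [Pi.smul_apply, smul_eq_mul] at h3
    have h4 : (u i - w i) * f = 0 := by
      rw [sub_mul, mul_comm (u i) f, mul_comm (w i) f, h3, sub_self]
    exact sub_eq_zero.mp ((mem_nonZeroDivisors_iff_right.mp hf) _ h4)
  have hbound : ∀ x ∈ LinearMap.ker π, (f ^ m) • x ∈ K' := by
    intro x hx
    obtain ⟨e, he⟩ := hK' x hx
    have step : ∀ d, m ≤ d → (f ^ (d+1)) • x ∈ K' → (f ^ d) • x ∈ K' := by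
      intro d hd h
      have hmem2 : (f ^ (d+1)) • x ∈ Ideal.span {f ^ m} • (⊤ : Submodule R (Fin n → R)) := by
        rw [Submodule.ideal_span_singleton_smul]
        have heq : (f ^ (d+1)) • x = (f ^ m) • ((f ^ (d+1-m)) • x) := by
          rw [smul_smul, ← pow_add, Nat.add_sub_cancel' (le_trans hd (Nat.le_succ d))]
        rw [heq]
        exact Submodule.smul_mem_pointwise_smul _ _ _ Submodule.mem_top
      have hmemf : (f ^ (d+1)) • x ∈ Ideal.span {f ^ 1} • K' := hm ⟨h, hmem2⟩
      rw [pow_one, Submodule.ideal_span_singleton_smul] at hmemf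
      have hmemf' : (f ^ (d+1)) • x ∈ f • (K' : Set (Fin n → R)) := by
        rwa [← Submodule.coe_pointwise_smul, SetLike.mem_coe]
      obtain ⟨k, hk, hfk⟩ := Set.mem_smul_set.mp hmemf'
      have heq2 : f • ((f ^ d) • x) = f • k := by
        rw [smul_smul, ← pow_succ']
        exact hfk.symm
      rw [hcancel _ _ heq2]
      exact hk
    have down : ∀ j, (f ^ (m + j)) • x ∈ K' → (f ^ m) • x ∈ K' := by
      intro j
      induction j with
      | zero => intro h; exact h
      | succ j IH =>
        intro h
        exact IH (step (m + j) (Nat.le_add_right m j) h)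
    apply down e
    have : (f ^ (m + e)) • x = (f ^ m) • ((f ^ e) • x) := by
      rw [smul_smul, ← pow_add]
    rw [this]
    exact Submodule.smul_mem K' _ he
  have hfm : f ^ m ∈ nonZeroDivisors R := pow_mem hf m
  have hK : LinearMap.ker π = Submodule.comap (LinearMap.lsmul R (Fin n → R) (f ^ m)) K' := by
    apply le_antisymm
    · intro x hx
      rw [Submodule.mem_comap]
      exact hbound x hx
    · intro x hx
      rw [Submodule.mem_comap] at hx
      have h5 : π ((f ^ m) • x) = 0 := hK'le hx
      rw [map_smul, smul_eq_mul] at h5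
      rw [LinearMap.mem_ker]
      have h6 : π x * f ^ m = 0 := by rw [mul_comm]; exact h5
      exact (mem_nonZeroDivisors_iff_right.mp hfm) _ h6
  have hKfg : (LinearMap.ker π).FG := by
    rw [hK]
    exact colon_pow_fg hf h2 hK'fg m
  have hfp := Module.finitePresentation_of_surjective π.rangeRestrict
    (LinearMap.surjective_rangeRestrict π)
    (by rw [LinearMap.ker_rangeRestrict]; exact hKfg)
  exact hrangeπ ▸ hfp
end

section
/- Let A be a commutative ring and r ≥ 1. Then for all s ≥ 1: [p]^{2s}·W_r(A) ⊆ p^s·W_r(A), p^{rs}·W_r(A) ⊆ W_r(pA)^s, and W_r(pA)^{p^r s} ⊆ [p]^s·W_r(A). In particular, the [p]-adic, W_r(pA)-adic, and p-adic topologies on W_r(A) coincide. -/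
section TruncatedWittVectorMap

variable {p : ℕ} [hp : Fact p.Prime] {R S : Type*} [CommRing R] [CommRing S]

private def twMapFun (n : ℕ) (g : R →+* S) (x : TruncatedWittVector p n R) :
    TruncatedWittVector p n S :=
  TruncatedWittVector.mk p (fun i => g (x.coeff i))

private lemma twMapFun_truncate (n : ℕ) (g : R →+* S) (w : WittVector p R) :
    twMapFun n g (WittVector.truncate n w) = WittVector.truncate n (WittVector.map g w) := by
  ext i
  simp [twMapFun, WittVector.coeff_truncate, WittVector.map_coeff]

/-- Functoriality of truncated Witt vectors: a ring homomorphism `R →+* S` induces a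
ring homomorphism `W_n(R) →+* W_n(S)`, acting coefficientwise. -/
noncomputable def truncatedWittVectorMap (n : ℕ) (g : R →+* S) :
    TruncatedWittVector p n R →+* TruncatedWittVector p n S where
  toFun := twMapFun n g
  map_one' := by
    show twMapFun n g 1 = 1
    rw [show (1 : TruncatedWittVector p n R) = WittVector.truncate n 1 from (map_one _).symm,
      twMapFun_truncate, map_one, map_one]
  map_mul' x y := by
    show twMapFun n g (x * y) = twMapFun n g x * twMapFun n g y
    obtain ⟨a, ha⟩ := WittVector.truncate_surjective p n R x
    obtain ⟨b, hb⟩ := WittVector.truncate_surjective p n R y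
    rw [← ha, ← hb, ← map_mul, twMapFun_truncate, twMapFun_truncate, twMapFun_truncate,
      map_mul, map_mul]
  map_zero' := by
    show twMapFun n g 0 = 0
    rw [show (0 : TruncatedWittVector p n R) = WittVector.truncate n 0 from (map_zero _).symm,
      twMapFun_truncate, map_zero, map_zero]
  map_add' x y := by
    show twMapFun n g (x + y) = twMapFun n g x + twMapFun n g y
    obtain ⟨a, ha⟩ := WittVector.truncate_surjective p n R x
    obtain ⟨b, hb⟩ := WittVector.truncate_surjective p n R y
    rw [← ha, ← hb, ← map_add, twMapFun_truncate, twMapFun_truncate, twMapFun_truncate,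
      map_add, map_add]

end TruncatedWittVectorMap

noncomputable section

variable {p : ℕ} [Fact p.Prime] {A : Type*} [CommRing A]

/-- The Teichmüller lift `A → W_r(A)`, `a ↦ [a]`. -/
def teich (r : ℕ) (a : A) : TruncatedWittVector p r A :=
  WittVector.truncate r (WittVector.teichmuller p a)

/-- For an ideal `J ⊆ A`, the ideal `W_r(J) := ker (W_r(A) → W_r(A/J))`. -/
def wittIdeal (r : ℕ) (J : Ideal A) : Ideal (TruncatedWittVector p r A) :=
  RingHom.ker (truncatedWittVectorMap (p := p) r (Ideal.Quotient.mk J))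

end


open Function

namespace StAux

variable {p : ℕ} [hp : Fact p.Prime] {A : Type*} [CommRing A]

local notation "𝕎" => WittVector p

lemma ghostComponent_zero_eq (x : 𝕎 A) : WittVector.ghostComponent 0 x = x.coeff 0 := by
  rw [WittVector.ghostComponent_apply, wittPolynomial_zero, MvPolynomial.aeval_X]

lemma exists_eq_verschiebung {x : 𝕎 A} (h : x.coeff 0 = 0) :
    ∃ y, x = WittVector.verschiebung y := by
  refine ⟨x.shift 1, ?_⟩
  simpa using WittVector.eq_iterate_verschiebung (x := x) (n := 1)
    (fun i hi => by interval_cases i; exact h)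

lemma exists_p_eq :
    ∃ η : 𝕎 A, (p : 𝕎 A) = WittVector.teichmuller p ((p : ℕ) : A)
      + WittVector.verschiebung η := by
  have h : ((p : 𝕎 A) - WittVector.teichmuller p ((p : ℕ) : A)).coeff 0 = 0 := by
    rw [← ghostComponent_zero_eq, map_sub, map_natCast, WittVector.ghostComponent_teichmuller]
    simp
  obtain ⟨y, hy⟩ := exists_eq_verschiebung h
  exact ⟨y, by rw [← hy]; ring⟩

lemma teich_sq : ∃ w : 𝕎 A, (WittVector.teichmuller p ((p : ℕ) : A)) ^ 2 = p * w := by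
  obtain ⟨η, hη⟩ := exists_p_eq (p := p) (A := A)
  set V : 𝕎 A →+ 𝕎 A := WittVector.verschiebung
  have h2 : V η * V η = V (η * η) * p := by
    have := WittVector.verschiebung_mul_frobenius η (V η)
    rw [WittVector.frobenius_verschiebung] at this
    have h3 : V (η * η) * (p : 𝕎 A) = WittVector.verschiebung (η * η * (p : 𝕎 A)) := by
      rw [← WittVector.verschiebung_mul_frobenius, map_natCast]
    rw [← this, h3]
    congr 1
    ring
  refine ⟨(p : 𝕎 A) - 2 * V η + V (η * η), ?_⟩
  have ht : WittVector.teichmuller p ((p : ℕ) : A) = (p : 𝕎 A) - V η := by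
    rw [hη]; ring
  rw [ht]
  linear_combination h2


private theorem frob_teich_aux₁ {R : Type*} (x : MvPolynomial R ℚ) :
    WittVector.frobenius (WittVector.teichmuller p x) = WittVector.teichmuller p (x ^ p) := by
  apply (WittVector.ghostMap.bijective_of_invertible p (MvPolynomial R ℚ)).1
  ext1 n
  simp only [WittVector.ghostMap_apply, WittVector.ghostComponent_frobenius,
    WittVector.ghostComponent_teichmuller, ← pow_mul]
  rw [pow_succ']

private theorem frob_teich_aux₂ {R : Type*} (x : MvPolynomial R ℤ) :
    WittVector.frobenius (WittVector.teichmuller p x) = WittVector.teichmuller p (x ^ p) := by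
  refine WittVector.map_injective (MvPolynomial.map (Int.castRingHom ℚ))
    (MvPolynomial.map_injective _ Int.cast_injective) ?_
  rw [(WittVector.frobenius_isPoly p).map, WittVector.map_teichmuller, WittVector.map_teichmuller,
    frob_teich_aux₁, RingHom.map_pow]

theorem frobenius_teichmuller (a : A) :
    WittVector.frobenius (WittVector.teichmuller p a) = WittVector.teichmuller p (a ^ p) := by
  rcases MvPolynomial.counit_surjective A a with ⟨x, rfl⟩
  rw [← WittVector.map_teichmuller, ← (WittVector.frobenius_isPoly p).map, frob_teich_aux₂,
    WittVector.map_teichmuller, map_pow]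

theorem iterate_frobenius_teichmuller (k : ℕ) (a : A) :
    (WittVector.frobenius (p := p))^[k] (WittVector.teichmuller p a)
      = WittVector.teichmuller p (a ^ p ^ k) := by
  induction k generalizing a with
  | zero => simp
  | succ k ih =>
      rw [Function.iterate_succ_apply, frobenius_teichmuller, ih, ← pow_mul, pow_succ']

theorem iterV_coeff_eq_zero {k i : ℕ} (h : i < k) (x : 𝕎 A) :
    ((WittVector.verschiebung (p := p))^[k] x).coeff i = 0 := by
  induction k generalizing i with
  | zero => omega
  | succ k ih =>
      rw [Function.iterate_succ_apply']
      cases i with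
      | zero => exact WittVector.verschiebung_coeff_zero _
      | succ i => rw [WittVector.verschiebung_coeff_succ]; exact ih (by omega)

theorem vteich_coeff (k n : ℕ) (a : A) :
    ((WittVector.verschiebung (p := p))^[k] (WittVector.teichmuller p a)).coeff n
      = if n = k then a else 0 := by
  rcases lt_trichotomy n k with h | rfl | h
  · rw [iterV_coeff_eq_zero h, if_neg (by omega)]
  · have h0 := WittVector.iterate_verschiebung_coeff (x := WittVector.teichmuller p a) n 0
    rw [zero_add, WittVector.teichmuller_coeff_zero] at h0
    rw [if_pos rfl, h0]
  · have h0 := WittVector.iterate_verschiebung_coeff (x := WittVector.teichmuller p a) k (n - k)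
    rw [show n - k + k = n by omega, WittVector.teichmuller_coeff_pos _ _ _ (by omega)] at h0
    rw [h0, if_neg (by omega)]

theorem sum_vteich_coeff (f : ℕ → A) (k m : ℕ) :
    ((∑ i ∈ Finset.range k,
      (WittVector.verschiebung (p := p))^[i] (WittVector.teichmuller p (f i))).coeff m)
      = if m < k then f m else 0 := by
  induction k generalizing m with
  | zero => simp
  | succ k ih =>
      rw [Finset.sum_range_succ, WittVector.coeff_add_of_disjoint]
      · rw [ih, vteich_coeff]
        split_ifs <;> first | rfl | omega | simp_all
      · intro n
        rcases lt_or_ge n k with h | h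
        · right; rw [vteich_coeff, if_neg (by omega)]
        · left; rw [ih, if_neg (by omega)]

theorem iterV_mul_natCast (i : ℕ) (x : 𝕎 A) (n : ℕ) :
    (WittVector.verschiebung (p := p))^[i] (x * (n : 𝕎 A))
      = (WittVector.verschiebung (p := p))^[i] x * (n : 𝕎 A) := by
  induction i generalizing x with
  | zero => simp
  | succ i ih =>
      rw [Function.iterate_succ_apply, Function.iterate_succ_apply',
        ← Function.iterate_succ_apply' (WittVector.verschiebung (p := p))]
      rw [show x * (n : 𝕎 A) = x * WittVector.frobenius (n : 𝕎 A) by rw [map_natCast],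
        WittVector.verschiebung_mul_frobenius, Function.iterate_succ_apply, ih]

theorem iterF_mul_natCast (i : ℕ) (x : 𝕎 A) (n : ℕ) :
    (WittVector.frobenius (p := p))^[i] (x * (n : 𝕎 A))
      = (WittVector.frobenius (p := p))^[i] x * (n : 𝕎 A) := by
  induction i generalizing x with
  | zero => simp
  | succ i ih =>
      rw [Function.iterate_succ_apply, Function.iterate_succ_apply, map_mul, map_natCast, ih]

theorem iterF_V {i j : ℕ} (h : i ≤ j) (x : 𝕎 A) :
    (WittVector.frobenius (p := p))^[i] ((WittVector.verschiebung (p := p))^[j] x)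
      = (WittVector.verschiebung (p := p))^[j - i] x * (p : 𝕎 A) ^ i := by
  induction i generalizing j with
  | zero => simp
  | succ i ih =>
      obtain ⟨j', rfl⟩ : ∃ j', j = j' + 1 := ⟨j - 1, by omega⟩
      rw [Function.iterate_succ_apply, Function.iterate_succ_apply'
        ((WittVector.verschiebung (p := p) : 𝕎 A →+ 𝕎 A) : 𝕎 A → 𝕎 A),
        WittVector.frobenius_verschiebung, iterF_mul_natCast, ih (by omega),
        show j' + 1 - (i + 1) = j' - i by omega, mul_assoc, ← pow_succ]


theorem teich_mul_teich (i j : ℕ) (h : i ≤ j) (a b : A) :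
    (WittVector.verschiebung (p := p))^[i] (WittVector.teichmuller p a) *
      (WittVector.verschiebung (p := p))^[j] (WittVector.teichmuller p b)
    = (WittVector.verschiebung (p := p))^[j]
        (WittVector.teichmuller p (a ^ p ^ (j - i) * b)) * (p : 𝕎 A) ^ i := by
  rw [WittVector.iterate_verschiebung_mul_left, iterF_V h, ← mul_assoc]
  have h1 : WittVector.teichmuller p a *
      (WittVector.verschiebung (p := p))^[j - i] (WittVector.teichmuller p b)
      = (WittVector.verschiebung (p := p))^[j - i]
          (WittVector.teichmuller p (a ^ p ^ (j - i) * b)) := by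
    rw [mul_comm, WittVector.iterate_verschiebung_mul_left, iterate_frobenius_teichmuller]
    have : WittVector.teichmuller p b * WittVector.teichmuller p (a ^ p ^ (j - i))
        = WittVector.teichmuller p (a ^ p ^ (j - i) * b) := by
      rw [← map_mul, mul_comm]
    rw [this]
  rw [← Nat.cast_pow, iterV_mul_natCast, h1, ← Function.iterate_add_apply,
    show i + (j - i) = j by omega, Nat.cast_pow]

theorem p_pow_eq_iterV {B : Type*} [CommRing B] (hB : ((p : ℕ) : B) = 0) (k : ℕ) (hk : 1 ≤ k) :
    ∃ c : WittVector p B, ((p : ℕ) : WittVector p B) ^ k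
      = (WittVector.verschiebung (p := p))^[k] c := by
  obtain ⟨η, hη⟩ := exists_p_eq (p := p) (A := B)
  rw [hB, WittVector.teichmuller_zero, zero_add] at hη
  induction k with
  | zero => omega
  | succ k ih =>
      rcases Nat.eq_or_lt_of_le hk with h1 | h1
      · exact ⟨η, by rw [← h1, pow_one, hη, Function.iterate_one]⟩
      · obtain ⟨c, hc⟩ := ih (by omega)
        refine ⟨η * WittVector.frobenius c, ?_⟩
        rw [Function.iterate_succ_apply, WittVector.verschiebung_mul_frobenius,
          ← hη, mul_comm ((p : ℕ) : WittVector p B) c, iterV_mul_natCast, ← hc, pow_succ]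

section Truncated

variable (r : ℕ)

lemma twMap_coeff {S : Type*} [CommRing S] (g : A →+* S) (x : TruncatedWittVector p r A)
    (i : Fin r) : (truncatedWittVectorMap r g x).coeff i = g (x.coeff i) := by
  show (twMapFun r g x).coeff i = g (x.coeff i)
  rw [twMapFun, TruncatedWittVector.coeff_mk]

lemma mem_wittIdeal_iff (J : Ideal A) (x : TruncatedWittVector p r A) :
    x ∈ wittIdeal (p := p) r J ↔ ∀ i : Fin r, x.coeff i ∈ J := by
  rw [wittIdeal, RingHom.mem_ker]
  constructor
  · intro h i
    have h2 := congrArg (fun z : TruncatedWittVector p r (A ⧸ J) => z.coeff i) h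
    simp only [twMap_coeff] at h2
    rw [← Ideal.Quotient.eq_zero_iff_mem]
    simpa using h2
  · intro h
    apply TruncatedWittVector.ext
    intro i
    rw [twMap_coeff]
    simpa using Ideal.Quotient.eq_zero_iff_mem.2 (h i)

lemma truncate_iterV_eq_zero {k : ℕ} (hk : r ≤ k) (x : 𝕎 A) :
    WittVector.truncate r ((WittVector.verschiebung (p := p))^[k] x) = 0 := by
  apply TruncatedWittVector.ext
  intro i
  rw [WittVector.coeff_truncate, iterV_coeff_eq_zero (lt_of_lt_of_le i.is_lt hk)]
  simp

/-- Generating set: truncations of `V^j [p^N * d]` for `j < r`. -/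
def genSet (N : ℕ) : Set (TruncatedWittVector p r A) :=
  {z | ∃ j, j < r ∧ ∃ d : A, z = WittVector.truncate r
      ((WittVector.verschiebung (p := p))^[j]
        (WittVector.teichmuller p (((p : ℕ) : A) ^ N * d)))}

lemma wittIdeal_le_span :
    wittIdeal (p := p) r (Ideal.span {((p : ℕ) : A)}) ≤ Ideal.span (genSet (p := p) (A := A) r 1) := by
  intro x hx
  obtain ⟨w, rfl⟩ := WittVector.truncate_surjective p r A x
  have hcoeff : ∀ i : Fin r, w.coeff i ∈ Ideal.span {((p : ℕ) : A)} := by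
    intro i
    have := (mem_wittIdeal_iff r _ _).1 hx i
    rwa [WittVector.coeff_truncate] at this
  have hdec : WittVector.truncate r w = ∑ i ∈ Finset.range r,
      WittVector.truncate r
        ((WittVector.verschiebung (p := p))^[i] (WittVector.teichmuller p (w.coeff i))) := by
    rw [← map_sum]
    apply TruncatedWittVector.ext
    intro i
    rw [WittVector.coeff_truncate, WittVector.coeff_truncate, sum_vteich_coeff,
      if_pos i.is_lt]
  rw [hdec]
  apply Ideal.sum_mem
  intro i hi
  obtain ⟨d, hd⟩ := Ideal.mem_span_singleton'.1 (hcoeff ⟨i, Finset.mem_range.1 hi⟩)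
  refine Ideal.subset_span ⟨i, Finset.mem_range.1 hi, d, ?_⟩
  have : w.coeff i = ((p : ℕ) : A) ^ 1 * d := by
    rw [pow_one, mul_comm]
    exact hd.symm
  rw [this]

private lemma mul_mem_comm {R : Type*} [CommRing R] {I : Ideal R} {a b : R}
    (h : a * b ∈ I) : b * a ∈ I := by rwa [mul_comm a b] at h

lemma gen_prod {i j : ℕ} (hij : i ≤ j) (hj : j < r) (M N : ℕ) (c d : A) :
    WittVector.truncate r ((WittVector.verschiebung (p := p))^[i]
        (WittVector.teichmuller p (((p : ℕ) : A) ^ M * c))) *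
      WittVector.truncate r ((WittVector.verschiebung (p := p))^[j]
        (WittVector.teichmuller p (((p : ℕ) : A) ^ N * d)))
      ∈ Ideal.span (genSet (p := p) (A := A) r (M + N)) := by
  rw [← map_mul, teich_mul_teich _ _ hij, map_mul]
  obtain ⟨f, hf⟩ : ∃ f, p ^ (j - i) = f + 1 :=
    ⟨p ^ (j - i) - 1, by have := pow_pos hp.out.pos (j - i); omega⟩
  have harg : (((p : ℕ) : A) ^ M * c) ^ p ^ (j - i) * (((p : ℕ) : A) ^ N * d)
      = ((p : ℕ) : A) ^ (M + N) * (((p : ℕ) : A) ^ (M * f) * c ^ p ^ (j - i) * d) := by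
    rw [hf, mul_pow, ← pow_mul, Nat.mul_add, Nat.mul_one, pow_add, pow_add]
    ring
  rw [harg]
  exact Ideal.mul_mem_right _ _ (Ideal.subset_span ⟨j, hj, _, rfl⟩)

lemma span_gen_mul (M N : ℕ) :
    Ideal.span (genSet (p := p) (A := A) r M) * Ideal.span (genSet (p := p) (A := A) r N)
      ≤ Ideal.span (genSet (p := p) (A := A) r (M + N)) := by
  rw [Ideal.span_mul_span']
  rw [Ideal.span_le]
  rintro z ⟨z1, ⟨i, hi, c, rfl⟩, z2, ⟨j, hj, d, rfl⟩, rfl⟩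
  rcases le_total i j with hij | hij
  · exact gen_prod (p := p) (A := A) r hij hj M N c d
  · have h2 := gen_prod (p := p) (A := A) r hij hi N M d c
    rw [Nat.add_comm N M] at h2
    exact mul_mem_comm h2

lemma span_gen_pow (k : ℕ) :
    Ideal.span (genSet (p := p) (A := A) r 1) ^ (k + 1) ≤ Ideal.span (genSet (p := p) (A := A) r (k + 1)) := by
  induction k with
  | zero => rw [pow_one]
  | succ k ih =>
      calc Ideal.span (genSet (p := p) (A := A) r 1) ^ (k + 2)
          = Ideal.span (genSet (p := p) (A := A) r 1) ^ (k + 1) * Ideal.span (genSet (p := p) (A := A) r 1) := by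
            rw [← pow_succ]
        _ ≤ Ideal.span (genSet (p := p) (A := A) r (k + 1)) * Ideal.span (genSet (p := p) (A := A) r 1) :=
            Ideal.mul_mono ih le_rfl
        _ ≤ Ideal.span (genSet (p := p) (A := A) r (k + 2)) := span_gen_mul r (k + 1) 1

lemma genSpan_le_teichPow (hr : 1 ≤ r) (s : ℕ) (hs : 1 ≤ s) :
    Ideal.span (genSet (p := p) (A := A) r (p ^ r * s))
      ≤ (Ideal.span {WittVector.truncate r (WittVector.teichmuller p ((p : ℕ) : A))}) ^ s := by
  rw [Ideal.span_le]
  rintro z ⟨j, hj, d, rfl⟩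
  set m := p ^ (r - j) * s with hm
  have hms : s ≤ m := Nat.le_mul_of_pos_left s (pow_pos hp.out.pos _)
  have hmj : m * p ^ j = p ^ r * s := by
    rw [hm, mul_comm (p ^ (r - j)) s, mul_assoc, ← pow_add,
      Nat.sub_add_cancel (le_of_lt hj), mul_comm s _]
  have harg : ((p : ℕ) : A) ^ (p ^ r * s) * d = d * (((p : ℕ) : A) ^ m) ^ p ^ j := by
    rw [← pow_mul, hmj, mul_comm]
  have hteich : WittVector.teichmuller p (((p : ℕ) : A) ^ (p ^ r * s) * d)
      = WittVector.teichmuller p d *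
        (WittVector.frobenius (p := p))^[j] (WittVector.teichmuller p (((p : ℕ) : A) ^ m)) := by
    rw [harg, iterate_frobenius_teichmuller, ← map_mul]
  have hpull : (WittVector.verschiebung (p := p))^[j]
      (WittVector.teichmuller p (((p : ℕ) : A) ^ (p ^ r * s) * d))
      = (WittVector.verschiebung (p := p))^[j] (WittVector.teichmuller p d) *
        WittVector.teichmuller p (((p : ℕ) : A) ^ m) := by
    rw [hteich, ← WittVector.iterate_verschiebung_mul_left]
  have htm : WittVector.teichmuller p (((p : ℕ) : A) ^ m)
      = (WittVector.teichmuller p ((p : ℕ) : A)) ^ m := by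
    induction m with
    | zero => simp
    | succ n ih => rw [pow_succ, pow_succ, ← ih, ← map_mul]
  rw [hpull, map_mul, htm, map_pow, Ideal.span_singleton_pow, SetLike.mem_coe, Ideal.mem_span_singleton]
  obtain ⟨q, hq⟩ : ∃ q, m = s + q := ⟨m - s, by omega⟩
  refine ⟨WittVector.truncate r ((WittVector.verschiebung (p := p))^[j]
      (WittVector.teichmuller p d)) *
    (WittVector.truncate r (WittVector.teichmuller p ((p : ℕ) : A))) ^ q, ?_⟩
  rw [hq, pow_add]
  ring

end Truncated

end StAux

/-- Let `A` be a commutative ring and `r ≥ 1`.  Then for all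
`s ≥ 1`:
`[p]^{2s}·W_r(A) ⊆ p^s·W_r(A)`, `p^{rs}·W_r(A) ⊆ W_r(pA)^s`, and
`W_r(pA)^{p^r·s} ⊆ [p]^s·W_r(A)`.
(In particular, the `[p]`-adic, `W_r(pA)`-adic and `p`-adic topologies on `W_r(A)`
coincide.) -/
theorem statement_13
    (p : ℕ) [Fact p.Prime] (A : Type*) [CommRing A]
    (r : ℕ) (hr : 1 ≤ r) (s : ℕ) (hs : 1 ≤ s) :
    (Ideal.span {teich (p := p) (A := A) r p}) ^ (2 * s)
        ≤ (Ideal.span {(p : TruncatedWittVector p r A)}) ^ s ∧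
    (Ideal.span {(p : TruncatedWittVector p r A)}) ^ (r * s)
        ≤ (wittIdeal (p := p) r (Ideal.span {(p : A)})) ^ s ∧
    (wittIdeal (p := p) r (Ideal.span {(p : A)})) ^ (p ^ r * s)
        ≤ (Ideal.span {teich (p := p) (A := A) r p}) ^ s := by
  have hp1 : 0 < p := (Fact.out : p.Prime).pos
  refine ⟨?_, ?_, ?_⟩
  · -- [p]^(2s) ⊆ p^s
    obtain ⟨w, hw⟩ := StAux.teich_sq (p := p) (A := A)
    have ht2 : (teich (p := p) (A := A) r ((p : ℕ) : A)) ^ 2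
        = ((p : ℕ) : TruncatedWittVector p r A) * WittVector.truncate r w := by
      show (WittVector.truncate r (WittVector.teichmuller p ((p : ℕ) : A))) ^ 2 = _
      rw [← map_pow, hw, map_mul, map_natCast]
    rw [Ideal.span_singleton_pow, Ideal.span_singleton_pow, Ideal.span_le,
      Set.singleton_subset_iff, SetLike.mem_coe, Ideal.mem_span_singleton]
    exact ⟨(WittVector.truncate r w) ^ s, by rw [pow_mul, ht2, mul_pow]⟩
  · -- p^(rs) ⊆ W_r(pA)^s
    have hB : ((p : ℕ) : A ⧸ Ideal.span {((p : ℕ) : A)}) = 0 := by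
      rw [← map_natCast (Ideal.Quotient.mk (Ideal.span {((p : ℕ) : A)}))]
      exact Ideal.Quotient.eq_zero_iff_mem.2 (Ideal.subset_span rfl)
    obtain ⟨c, hc⟩ := StAux.p_pow_eq_iterV (p := p) hB r hr
    have hker : ((p : ℕ) : TruncatedWittVector p r A) ^ r
        ∈ wittIdeal (p := p) r (Ideal.span {((p : ℕ) : A)}) := by
      rw [wittIdeal, RingHom.mem_ker, map_pow, map_natCast,
        show ((p : ℕ) : TruncatedWittVector p r (A ⧸ Ideal.span {((p : ℕ) : A)}))
          = WittVector.truncate r ((p : ℕ) : WittVector p (A ⧸ Ideal.span {((p : ℕ) : A)}))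
          from (map_natCast (WittVector.truncate r) p).symm,
        ← map_pow, hc, StAux.truncate_iterV_eq_zero r le_rfl]
    rw [Ideal.span_singleton_pow, Ideal.span_le, Set.singleton_subset_iff, SetLike.mem_coe,
      pow_mul]
    exact Ideal.pow_mem_pow hker s
  · -- W_r(pA)^(p^r s) ⊆ [p]^s
    obtain ⟨k, hk⟩ : ∃ k, p ^ r * s = k + 1 :=
      ⟨p ^ r * s - 1, by have := Nat.mul_pos (pow_pos hp1 r) hs; omega⟩
    calc (wittIdeal (p := p) r (Ideal.span {((p : ℕ) : A)})) ^ (p ^ r * s)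
        ≤ (Ideal.span (StAux.genSet (p := p) (A := A) r 1)) ^ (p ^ r * s) :=
          Ideal.pow_right_mono (StAux.wittIdeal_le_span r) _
      _ ≤ Ideal.span (StAux.genSet (p := p) (A := A) r (p ^ r * s)) := by
          rw [hk]; exact StAux.span_gen_pow r k
      _ ≤ (Ideal.span {teich (p := p) (A := A) r ((p : ℕ) : A)}) ^ s :=
          StAux.genSpan_le_teichPow r hr s hs
end

section
/- Let A be a commutative ring, I ⊆ A an ideal, and f ∈ I a non-zero-divisor. Let M be an A-module such that neither M nor M/fM contains a nonzero element annihilated by I. Let α : M → N be a map of A-modules whose kernel and cokernel are annihilated by I. Then the induced map M/M[f] → N/N[f] is an isomorphism, where M[f] = {x ∈ M : fx = 0} and N[f] = {y ∈ N : fy = 0} denote the f-torsion submodules. -/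
/-- Let `A` be a commutative ring, `I ⊆ A` an ideal, and `f ∈ I` a
non-zero-divisor.  Let `M` be an `A`-module such that neither `M` nor `M/fM` contains a
nonzero element annihilated by `I`.  Let `α : M → N` be a map of `A`-modules whose
kernel and cokernel are annihilated by `I`.  Then the induced map
`M/M[f] → N/N[f]` is an isomorphism, where `M[f]`, `N[f]` are the `f`-torsion
submodules. -/
theorem statement_18
    (A : Type*) [CommRing A] (I : Ideal A) (f : A)
    (hfI : f ∈ I) (hf : f ∈ nonZeroDivisors A)
    (M N : Type*) [AddCommGroup M] [Module A M] [AddCommGroup N] [Module A N]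
    (hM : ∀ x : M, (∀ a ∈ I, a • x = 0) → x = 0)
    (hMf : ∀ x : M ⧸ (Ideal.span {f} • (⊤ : Submodule A M)), (∀ a ∈ I, a • x = 0) → x = 0)
    (α : M →ₗ[A] N)
    (hker : ∀ a ∈ I, ∀ x ∈ LinearMap.ker α, a • x = 0)
    (hcoker : ∀ a ∈ I, ∀ y : N, a • y ∈ LinearMap.range α) :
    Function.Bijective
      (Submodule.mapQ (Submodule.torsionBy A M f) (Submodule.torsionBy A N f) α
        (fun x hx => by
          simp only [Submodule.mem_comap, Submodule.mem_torsionBy_iff] at hx ⊢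
          rw [← map_smul, hx, map_zero])) := by
  -- α is injective
  have hαinj : Function.Injective α := by
    rw [← LinearMap.ker_eq_bot, Submodule.eq_bot_iff]
    intro x hx
    exact hM x (fun a ha => hker a ha x hx)
  constructor
  · -- injectivity
    rw [← LinearMap.ker_eq_bot, Submodule.eq_bot_iff]
    intro x hx
    obtain ⟨m, rfl⟩ := Submodule.Quotient.mk_surjective _ x
    rw [LinearMap.mem_ker, Submodule.mapQ_apply] at hx
    rw [Submodule.Quotient.mk_eq_zero] at hx ⊢
    rw [Submodule.mem_torsionBy_iff] at hx ⊢
    apply hαinj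
    rw [map_smul, hx, map_zero]
  · -- surjectivity
    intro y
    obtain ⟨n, rfl⟩ := Submodule.Quotient.mk_surjective _ y
    obtain ⟨x, hx⟩ := hcoker f hfI n
    -- x is in f • M
    have hxfM : (Submodule.Quotient.mk x : M ⧸ (Ideal.span {f} • (⊤ : Submodule A M))) = 0 := by
      apply hMf
      intro a ha
      obtain ⟨w, hw⟩ := hcoker a ha n
      have : f • w = a • x := by
        apply hαinj
        rw [map_smul, map_smul, hw, hx, smul_comm]
      rw [← Submodule.Quotient.mk_smul, Submodule.Quotient.mk_eq_zero, ← this]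
      exact Submodule.smul_mem_smul (Ideal.mem_span_singleton_self f) trivial
    rw [Submodule.Quotient.mk_eq_zero] at hxfM
    obtain ⟨z, hz⟩ : ∃ z : M, f • z = x := by
      refine Submodule.smul_induction_on hxfM ?_ ?_
      · intro a ha m _
        obtain ⟨c, rfl⟩ := Ideal.mem_span_singleton'.mp ha
        exact ⟨c • m, by rw [smul_smul, mul_comm]⟩
      · rintro _ _ ⟨z1, rfl⟩ ⟨z2, rfl⟩
        exact ⟨z1 + z2, by rw [smul_add]⟩
    refine ⟨Submodule.Quotient.mk z, ?_⟩
    rw [Submodule.mapQ_apply, Submodule.Quotient.eq, Submodule.mem_torsionBy_iff,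
      smul_sub, ← map_smul, hz, hx, sub_self]
end
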